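/- arXiv:1410.7250 — 5 statements merged into one kernel-verified Lean document; each statement's English description precedes it below -/
import Mathlib

section
/- Let (Ω, ν) be a σ-finite measure space with L²(Ω) separable, H a separable Hilbert space, and D a determining set for L¹(Ω). A closed subspace M ⊆ L²(Ω, H) is multiplicatively invariant with respect to D if and only if there exists a measurable range function J : Ω → {closed subspaces of H} such that M = {Φ ∈ L²(Ω, H) : Φ(ω) ∈ J(ω) for a.e. ω ∈ Ω}. -/
open MeasureTheory Submodule Topology Filter InnerProductSpace

set_option linter.unusedSectionVars false

noncomputable section

namespace MIAux

variable {E : Type*} [NormedAddCommGroup E] [InnerProductSpace ℂ E]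

local notation "⟪" x ", " y "⟫" => inner (𝕜 := ℂ) x y

lemma exists_mem_span_Iio {v : ℕ → E} {w : E} (hw : w ∈ span ℂ (Set.range v)) :
    ∃ n, w ∈ span ℂ (v '' Set.Iio n) := by
  induction hw using Submodule.span_induction with
  | mem x hx =>
      obtain ⟨i, rfl⟩ := hx
      exact ⟨i + 1, subset_span ⟨i, by simp, rfl⟩⟩
  | zero => exact ⟨0, zero_mem _⟩
  | add x y _ _ hx hy =>
      obtain ⟨m, hm⟩ := hx
      obtain ⟨n, hn⟩ := hy
      refine ⟨max m n, add_mem ?_ ?_⟩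
      · exact span_mono (Set.image_mono (Set.Iio_subset_Iio (le_max_left _ _))) hm
      · exact span_mono (Set.image_mono (Set.Iio_subset_Iio (le_max_right _ _))) hn
  | smul c x _ hx =>
      obtain ⟨n, hn⟩ := hx
      exact ⟨n, smul_mem _ _ hn⟩

variable [CompleteSpace E]

lemma proj_span_Iio_eq_sum (v : ℕ → E) (a : E) (n : ℕ) :
    haveI := FiniteDimensional.span_of_finite ℂ ((Set.finite_Iio n).image v)
    (orthogonalProjection (span ℂ (v '' Set.Iio n)) a : E)
      = ∑ i ∈ Finset.range n,
          (⟪gramSchmidt ℂ v i, a⟫ / ((‖gramSchmidt ℂ v i‖ : ℂ) ^ 2)) • gramSchmidt ℂ v i := by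
  haveI := FiniteDimensional.span_of_finite ℂ ((Set.finite_Iio n).image v)
  apply eq_starProjection_of_mem_of_inner_eq_zero
  · apply Submodule.sum_mem
    intro i hi
    apply Submodule.smul_mem
    exact span_mono (Set.image_mono (fun x hx => lt_of_le_of_lt hx (Finset.mem_range.1 hi)))
      (gramSchmidt_mem_span ℂ v le_rfl)
  · intro w hw
    rw [← span_gramSchmidt_Iio ℂ v n] at hw
    rw [inner_eq_zero_symm]
    induction hw using Submodule.span_induction with
    | mem x hx =>
        obtain ⟨j, hj, rfl⟩ := hx
        rw [Set.mem_Iio] at hj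
        rw [inner_sub_right, inner_sum]
        rw [Finset.sum_eq_single j]
        · rw [inner_smul_right]
          by_cases hgs : gramSchmidt ℂ v j = 0
          · simp [hgs]
          · have h2 : ((‖gramSchmidt ℂ v j‖ : ℂ)) ^ 2 ≠ 0 := by
              simpa using hgs
            rw [inner_self_eq_norm_sq_to_K]
            field_simp
            simp [hgs]
        · intro b _ hb
          rw [inner_smul_right, gramSchmidt_orthogonal ℂ v (Ne.symm hb), mul_zero]
        · intro hj'
          exact absurd (Finset.mem_range.2 hj) hj'
    | zero => simp
    | add x y _ _ hx hy => rw [inner_add_left, hx, hy, add_zero]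
    | smul c x _ hx => rw [inner_smul_left, hx, mul_zero]


lemma tendsto_proj_span_Iio (v : ℕ → E) (a : E) :
    Filter.Tendsto
      (fun n => haveI := FiniteDimensional.span_of_finite ℂ ((Set.finite_Iio n).image v)
        (orthogonalProjection (span ℂ (v '' Set.Iio n)) a : E)) Filter.atTop
      (nhds (orthogonalProjection (span ℂ (Set.range v)).topologicalClosure a : E)) := by
  set K := (span ℂ (Set.range v)).topologicalClosure with hK
  set P : E := (orthogonalProjection K a : E) with hP
  have hPK : P ∈ K := SetLike.coe_mem _
  have haP : a - P ∈ Kᗮ := sub_starProjection_mem_orthogonal a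
  have hFK : ∀ n, span ℂ (v '' Set.Iio n) ≤ K := by
    intro n
    refine le_trans (span_mono ?_) (Submodule.le_topologicalClosure _)
    exact Set.image_subset_range _ _
  rw [Metric.tendsto_atTop]
  intro ε hε
  have hPcl : P ∈ closure (span ℂ (Set.range v) : Set E) := hPK
  obtain ⟨w, hw, hwP⟩ := Metric.mem_closure_iff.1 hPcl ε hε
  obtain ⟨N, hN⟩ := exists_mem_span_Iio hw
  refine ⟨N, fun n hn => ?_⟩
  haveI := FiniteDimensional.span_of_finite ℂ ((Set.finite_Iio n).image v)
  set F := span ℂ (v '' Set.Iio n) with hF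
  have hwF : w ∈ F := span_mono (Set.image_mono (Set.Iio_subset_Iio hn)) hN
  -- q n = proj_F a = proj_F P
  have hqP : (orthogonalProjection F a : E) = (orthogonalProjection F P : E) := by
    have : a = P + (a - P) := by abel
    rw [this, map_add, Submodule.orthogonalProjectionOnto_apply_of_mem_orthogonal
      (Submodule.orthogonal_le (hFK n) haP)]
    simp
  have hmin : ‖P - (orthogonalProjection F P : E)‖ ≤ ‖P - w‖ := by
    rw [show (orthogonalProjection F P : E) = F.starProjection P from rfl, starProjection_minimal]
    exact ciInf_le ⟨0, fun x ⟨y, hy⟩ => hy ▸ norm_nonneg _⟩ (⟨w, hwF⟩ : F)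
  calc dist (orthogonalProjection F a : E) P = ‖P - (orthogonalProjection F P : E)‖ := by
        rw [hqP, dist_eq_norm, norm_sub_rev]
    _ ≤ ‖P - w‖ := hmin
    _ = dist P w := (dist_eq_norm _ _).symm
    _ < ε := hwP

lemma stronglyMeasurable_gramSchmidt' [SecondCountableTopology E] {Ω : Type*} [MeasurableSpace Ω]
    {f : ℕ → Ω → E} (hf : ∀ n, StronglyMeasurable (f n)) (i : ℕ) :
    StronglyMeasurable (fun ω => gramSchmidt ℂ (fun k => f k ω) i) := by
  induction i using Nat.strong_induction_on with
  | _ i ih =>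
    have : (fun ω => gramSchmidt ℂ (fun k => f k ω) i)
        = fun ω => f i ω - ∑ j ∈ Finset.Iio i,
            (inner ℂ (gramSchmidt ℂ (fun k => f k ω) j) (f i ω) /
              ((‖gramSchmidt ℂ (fun k => f k ω) j‖ : ℂ) ^ 2)) • gramSchmidt ℂ (fun k => f k ω) j := by
      funext ω
      rw [gramSchmidt_def ℂ (fun k => f k ω) i]
      congr 1
      refine Finset.sum_congr rfl fun j _ => ?_
      rw [starProjection_singleton]
      norm_cast
    rw [this]
    borelize E
    refine (hf i).sub (Finset.stronglyMeasurable_fun_sum _ fun j hj => ?_)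
    have hgs := ih j (Finset.mem_Iio.1 hj)
    have hcoef : StronglyMeasurable fun ω =>
        (inner ℂ (gramSchmidt ℂ (fun k => f k ω) j) (f i ω) /
          ((‖gramSchmidt ℂ (fun k => f k ω) j‖ : ℂ) ^ 2) : ℂ) := by
      apply Measurable.stronglyMeasurable
      apply Measurable.div
      · exact Measurable.inner hgs.measurable (hf i).measurable
      · exact (Complex.measurable_ofReal.comp hgs.measurable.norm).pow_const 2
    exact hcoef.smul hgs

lemma stronglyMeasurable_proj {Ω : Type*} [SecondCountableTopology E] [MeasurableSpace Ω]
    {f : ℕ → Ω → E} (hf : ∀ n, StronglyMeasurable (f n)) (a : E) :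
    StronglyMeasurable (fun ω =>
      (orthogonalProjection ((span ℂ (Set.range fun n => f n ω)).topologicalClosure) a : E)) := by
  set q : ℕ → Ω → E := fun n ω => ∑ i ∈ Finset.range n,
      (inner ℂ (gramSchmidt ℂ (fun k => f k ω) i) a /
        ((‖gramSchmidt ℂ (fun k => f k ω) i‖ : ℂ) ^ 2)) • gramSchmidt ℂ (fun k => f k ω) i
    with hqdef
  have hq : ∀ n, StronglyMeasurable (q n) := by
    intro n
    borelize E
    refine Finset.stronglyMeasurable_fun_sum _ fun i _ => ?_
    have hgs := stronglyMeasurable_gramSchmidt' hf i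
    have hcoef : StronglyMeasurable fun ω =>
        (inner ℂ (gramSchmidt ℂ (fun k => f k ω) i) a /
          ((‖gramSchmidt ℂ (fun k => f k ω) i‖ : ℂ) ^ 2) : ℂ) := by
      apply Measurable.stronglyMeasurable
      apply Measurable.div
      · exact Measurable.inner hgs.measurable measurable_const
      · exact (Complex.measurable_ofReal.comp hgs.measurable.norm).pow_const 2
    exact hcoef.smul hgs
  apply stronglyMeasurable_of_tendsto Filter.atTop hq
  rw [tendsto_pi_nhds]
  intro ω
  have hconv := tendsto_proj_span_Iio (fun k => f k ω) a
  have : (fun n => q n ω) = fun n =>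
      haveI := FiniteDimensional.span_of_finite ℂ ((Set.finite_Iio n).image (fun k => f k ω))
      (orthogonalProjection (span ℂ ((fun k => f k ω) '' Set.Iio n)) a : E) := by
    funext n
    exact (proj_span_Iio_eq_sum (fun k => f k ω) a n).symm
  rw [this]
  exact hconv


lemma isSeparable_Lp_univ {Ω : Type*} [MeasurableSpace Ω] (ν : Measure Ω)
    [TopologicalSpace.SeparableSpace (Lp ℂ 2 ν)] [SecondCountableTopology E] :
    TopologicalSpace.IsSeparable (Set.univ : Set (Lp E 2 ν)) := by
  classical
  -- the bilinear "tensor" map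
  let B : E →ₗ[ℂ] Lp ℂ 2 ν →ₗ[ℂ] Lp E 2 ν :=
    { toFun := fun c => (ContinuousLinearMap.toSpanSingleton ℂ c).compLpₗ 2 ν
      map_add' := by
        intro c c'
        rw [ContinuousLinearMap.toSpanSingleton_add (R₁ := ℂ) c c']
        refine LinearMap.ext fun h => ?_
        exact ContinuousLinearMap.add_compLp _ _ h
      map_smul' := by
        intro m c
        rw [ContinuousLinearMap.toSpanSingleton_smul (R₁ := ℂ) m c]
        refine LinearMap.ext fun h => ?_
        exact ContinuousLinearMap.smul_compLp m _ h }
  have hBnorm : ∀ (c : E) (h : Lp ℂ 2 ν), ‖B c h‖ ≤ 1 * ‖c‖ * ‖h‖ := by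
    intro c h
    rw [one_mul]
    refine le_trans (ContinuousLinearMap.norm_compLp_le _ _) ?_
    rw [ContinuousLinearMap.norm_toSpanSingleton]
  let Bc := LinearMap.mkContinuous₂ B 1 hBnorm
  have hcont : Continuous fun p : Lp ℂ 2 ν × E => (ContinuousLinearMap.toSpanSingleton ℂ p.2).compLp p.1 := by
    have heq : (fun p : Lp ℂ 2 ν × E => (ContinuousLinearMap.toSpanSingleton ℂ p.2).compLp p.1)
        = (fun q : (Lp ℂ 2 ν →L[ℂ] Lp E 2 ν) × Lp ℂ 2 ν => q.1 q.2)
          ∘ (fun p : Lp ℂ 2 ν × E => (Bc p.2, p.1)) := rfl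
    rw [heq]
    exact isBoundedBilinearMap_apply.continuous.comp
      ((Bc.continuous.comp continuous_snd).prodMk continuous_fst)
  set S : Set (Lp E 2 ν) :=
    Set.range (fun p : Lp ℂ 2 ν × E => (ContinuousLinearMap.toSpanSingleton ℂ p.2).compLp p.1) with hS
  have hSsep : TopologicalSpace.IsSeparable S := by
    rw [hS, ← Set.image_univ]
    exact (TopologicalSpace.IsSeparable.of_separableSpace Set.univ).image hcont
  have hspan : TopologicalSpace.IsSeparable (closure (span ℂ S : Set (Lp E 2 ν))) :=
    hSsep.span.closure
  refine TopologicalSpace.IsSeparable.mono hspan ?_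
  have hall : ∀ f : Lp E 2 ν, f ∈ (span ℂ S).topologicalClosure := by
    intro f
    induction f using Lp.induction (hp_ne_top := (by norm_num : (2 : ENNReal) ≠ ⊤)) with
    | @indicatorConst c s hs hμs =>
        apply Submodule.le_topologicalClosure
        apply Submodule.subset_span
        refine ⟨(indicatorConstLp 2 hs hμs.ne (1 : ℂ), c), ?_⟩
        apply Lp.ext
        filter_upwards [ContinuousLinearMap.coeFn_compLp (ContinuousLinearMap.toSpanSingleton ℂ c)
            (indicatorConstLp 2 hs hμs.ne (1 : ℂ)),
          indicatorConstLp_coeFn (p := 2) (hs := hs) (hμs := hμs.ne) (c := (1 : ℂ)),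
          Lp.simpleFunc.coe_indicatorConst (p := 2) hs hμs.ne c ▸
            indicatorConstLp_coeFn (p := 2) (hs := hs) (hμs := hμs.ne) (c := c)] with ω h1 h2 h3
        rw [h1, h2]
        rw [show ((Lp.simpleFunc.indicatorConst 2 hs hμs.ne c : Lp E 2 ν) : Ω → E) ω
            = Set.indicator s (fun _ => c) ω from h3]
        by_cases hω : ω ∈ s
        · simp [Set.indicator_of_mem hω, ContinuousLinearMap.toSpanSingleton_apply]
        · simp [Set.indicator_of_notMem hω]
    | add hf hg hfg hPf hPg => exact Submodule.add_mem _ hPf hPg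
    | isClosed => exact Submodule.isClosed_topologicalClosure _
  exact fun f _ => hall f

end MIAux

/-- A range function `J : Ω → {closed subspaces of E}` is measurable if for each `a ∈ E`
the map `ω ↦ P_{J(ω)} a` is measurable; the orthogonal projection `P_{J(ω)} a` is encoded
as the (unique) nearest point to `a` in the closed subspace `J(ω)`. -/
def IsMeasurableRangeFunction {Ω E : Type*} [MeasurableSpace Ω]
    [NormedAddCommGroup E] [InnerProductSpace ℂ E] (J : Ω → Submodule ℂ E) : Prop :=
  (∀ ω, IsClosed (J ω : Set E)) ∧
  ∀ a : E, ∃ p : Ω → E, StronglyMeasurable p ∧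
    ∀ ω, p ω ∈ J ω ∧ ∀ v ∈ J ω, ‖a - p ω‖ ≤ ‖a - v‖

/-- A set `M ⊆ L²(Ω, E)` is multiplicatively invariant with respect to `D ⊆ L^∞(Ω)`
if `Φ ∈ M` implies `gΦ ∈ M` for every `g ∈ D`. -/
def IsMISpace {Ω E : Type*} [MeasurableSpace Ω] [NormedAddCommGroup E]
    [InnerProductSpace ℂ E] (ν : Measure Ω) (D : Set (Ω → ℂ))
    (M : Set (Lp E 2 ν)) : Prop :=
  ∀ Φ ∈ M, ∀ g ∈ D, ∀ Ψ : Lp E 2 ν, (⇑Ψ =ᵐ[ν] fun ω => g ω • (⇑Φ ω)) → Ψ ∈ M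

/-- Bownik–Ross characterization of multiplicatively invariant subspaces of the Bochner
space `L²(Ω, H)` in terms of measurable range functions. -/
theorem mi_space_iff_range_function
    {Ω : Type*} [MeasurableSpace Ω] (ν : Measure Ω) [SigmaFinite ν]
    {E : Type*} [NormedAddCommGroup E] [InnerProductSpace ℂ E] [CompleteSpace E]
    [SecondCountableTopology E]
    [TopologicalSpace.SeparableSpace (Lp ℂ 2 ν)]  -- L²(Ω) is separable
    (D : Set (Ω → ℂ))
    (hDbdd : ∀ g ∈ D, MemLp g ⊤ ν)
    (hDdet : ∀ f : Ω → ℂ, Integrable f ν →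
      (∀ g ∈ D, ∫ ω, f ω * g ω ∂ν = 0) → f =ᵐ[ν] 0)
    (M : Submodule ℂ (Lp E 2 ν)) (hM : IsClosed (M : Set (Lp E 2 ν))) :
    IsMISpace ν D (M : Set (Lp E 2 ν)) ↔
      ∃ J : Ω → Submodule ℂ E, IsMeasurableRangeFunction J ∧
        ∀ Φ : Lp E 2 ν, Φ ∈ M ↔ ∀ᵐ ω ∂ν, Φ ω ∈ J ω := by
  constructor
  · intro hMI
    -- a countable dense family in M
    have hsepM : TopologicalSpace.IsSeparable (M : Set (Lp E 2 ν)) :=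
      (MIAux.isSeparable_Lp_univ (E := E) ν).mono (Set.subset_univ _)
    haveI := hsepM.separableSpace
    obtain ⟨s, hsc, hsd⟩ := TopologicalSpace.exists_countable_dense (M : Set (Lp E 2 ν))
    haveI hne : Nonempty (M : Set (Lp E 2 ν)) := ⟨⟨0, M.zero_mem⟩⟩
    obtain ⟨u, hu⟩ := hsc.exists_eq_range (hsd.nonempty)
    set Φn : ℕ → Lp E 2 ν := fun n => (u n : Lp E 2 ν) with hΦn
    have hΦnM : ∀ n, Φn n ∈ M := fun n => (u n).2
    have hdense : ∀ Φ ∈ M, ∀ ε > 0, ∃ n, dist Φ (Φn n) < ε := by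
      intro Φ hΦ ε hε
      have hcl : (⟨Φ, hΦ⟩ : (M : Set (Lp E 2 ν))) ∈ closure s := hsd _
      obtain ⟨b, hb, hdist⟩ := Metric.mem_closure_iff.1 hcl ε hε
      rw [hu] at hb
      obtain ⟨n, rfl⟩ := hb
      exact ⟨n, by simpa [Subtype.dist_eq] using hdist⟩
    -- strongly measurable representatives
    set f : ℕ → Ω → E := fun n => (Lp.aestronglyMeasurable (Φn n)).mk _ with hfdef
    have hf : ∀ n, StronglyMeasurable (f n) :=
      fun n => (Lp.aestronglyMeasurable (Φn n)).stronglyMeasurable_mk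
    have hfe : ∀ n, ⇑(Φn n) =ᵐ[ν] f n :=
      fun n => (Lp.aestronglyMeasurable (Φn n)).ae_eq_mk
    -- the range function
    set J : Ω → Submodule ℂ E :=
      fun ω => (Submodule.span ℂ (Set.range fun n => f n ω)).topologicalClosure with hJdef
    have hJc : ∀ ω, IsClosed (J ω : Set E) :=
      fun ω => Submodule.isClosed_topologicalClosure _
    -- each Φn is in J pointwise a.e.
    have hmemJ : ∀ᵐ ω ∂ν, ∀ n, (Φn n) ω ∈ J ω := by
      rw [MeasureTheory.ae_all_iff]
      intro n
      filter_upwards [hfe n] with ω h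
      rw [h]
      exact Submodule.le_topologicalClosure _ (Submodule.subset_span ⟨n, rfl⟩)
    -- forward inclusion : members of M take values in J a.e.
    have hfwd : ∀ Φ : Lp E 2 ν, Φ ∈ M → ∀ᵐ ω ∂ν, Φ ω ∈ J ω := by
      intro Φ hΦ
      have hsel : ∀ k : ℕ, ∃ n, dist Φ (Φn n) < ((k : ℝ) + 1)⁻¹ :=
        fun k => hdense Φ hΦ _ (by positivity)
      choose ns hns using hsel
      have htend : Filter.Tendsto (fun k => Φn (ns k)) Filter.atTop (nhds Φ) := by
        rw [tendsto_iff_dist_tendsto_zero]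
        refine squeeze_zero (fun k => dist_nonneg) (fun k => ?_)
          tendsto_one_div_add_atTop_nhds_zero_nat
        rw [dist_comm, one_div]
        exact (hns k).le
      rw [Lp.tendsto_Lp_iff_tendsto_eLpNorm'] at htend
      have hmeas : TendstoInMeasure ν (fun k => ⇑(Φn (ns k))) Filter.atTop ⇑Φ :=
        tendstoInMeasure_of_tendsto_eLpNorm (by norm_num)
          (fun k => Lp.aestronglyMeasurable _) (Lp.aestronglyMeasurable _) htend
      obtain ⟨ks, _, hae⟩ := hmeas.exists_seq_tendsto_ae
      filter_upwards [hae, hmemJ] with ω h1 h2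
      exact (hJc ω).mem_of_tendsto h1 (Filter.Eventually.of_forall fun j => h2 _)
    -- backward inclusion, using the determining set and multiplicative invariance
    have hbwd : ∀ Φ : Lp E 2 ν, (∀ᵐ ω ∂ν, Φ ω ∈ J ω) → Φ ∈ M := by
      intro Φ hΦJ
      haveI : CompleteSpace M := hM.completeSpace_coe
      set PΦ : Lp E 2 ν := (orthogonalProjection M Φ : Lp E 2 ν) with hPdef
      have hPΦM : PΦ ∈ M := SetLike.coe_mem _
      have hΨorth : Φ - PΦ ∈ Mᗮ := sub_starProjection_mem_orthogonal Φ
      set Ψ : Lp E 2 ν := Φ - PΦ with hΨdef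
      have hinner0 : ∀ n, (fun ω => (inner ℂ (Ψ ω) ((Φn n) ω) : ℂ)) =ᵐ[ν] 0 := by
        intro n
        refine hDdet _ (MeasureTheory.L2.integrable_inner Ψ (Φn n)) ?_
        intro g hg
        have hmem2 : MemLp (fun ω => g ω • (Φn n) ω) 2 ν :=
          MemLp.smul (r := 2) (Lp.memLp (Φn n)) (hDbdd g hg)
        set Θ : Lp E 2 ν := hmem2.toLp _ with hΘdef
        have hΘM : Θ ∈ M := by
          refine hMI (Φn n) (hΦnM n) g hg Θ ?_
          exact hmem2.coeFn_toLp
        have h0 : (inner ℂ Ψ Θ : ℂ) = 0 :=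
          (Submodule.mem_orthogonal' _ _).1 hΨorth Θ hΘM
        rw [MeasureTheory.L2.inner_def] at h0
        rw [← h0]
        apply integral_congr_ae
        filter_upwards [hmem2.coeFn_toLp] with ω h
        rw [h, inner_smul_right]
        ring
      have hinner0' : ∀ᵐ ω ∂ν, ∀ n, (inner ℂ (Ψ ω) ((Φn n) ω) : ℂ) = 0 := by
        rw [MeasureTheory.ae_all_iff]
        intro n
        filter_upwards [hinner0 n] with ω h
        exact h
      have hPJ : ∀ᵐ ω ∂ν, PΦ ω ∈ J ω := hfwd PΦ hPΦM
      have hΨc : ⇑Ψ =ᵐ[ν] ⇑Φ - ⇑PΦ := Lp.coeFn_sub Φ PΦ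
      have hfa : ∀ᵐ ω ∂ν, ∀ n, (Φn n) ω = f n ω := by
        rw [MeasureTheory.ae_all_iff]; exact fun n => hfe n
      have hkey : ⇑Φ =ᵐ[ν] ⇑PΦ := by
        filter_upwards [hinner0', hPJ, hΦJ, hΨc, hfa] with ω hz hp hj hc hfaω
        have hcω : Ψ ω = Φ ω - PΦ ω := hc
        set z : E := Φ ω - PΦ ω with hzdef
        have hzJ : z ∈ J ω := Submodule.sub_mem _ hj hp
        have hspan : Submodule.span ℂ (Set.range fun n => f n ω) ≤ (ℂ ∙ z)ᗮ := by
          rw [Submodule.span_le]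
          rintro x ⟨n, rfl⟩
          rw [SetLike.mem_coe, Submodule.mem_orthogonal_singleton_iff_inner_right]
          have hzn := hz n
          rw [hcω, hfaω n] at hzn
          exact hzn
        have hJorth : J ω ≤ (ℂ ∙ z)ᗮ :=
          Submodule.topologicalClosure_minimal _ hspan (Submodule.isClosed_orthogonal _)
        have hzz : (inner ℂ z z : ℂ) = 0 := by
          have := hJorth hzJ
          rwa [Submodule.mem_orthogonal_singleton_iff_inner_right] at this
        have hz0 : z = 0 := inner_self_eq_zero.1 hzz
        rw [hzdef, sub_eq_zero] at hz0
        exact hz0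
      have : Φ = PΦ := Lp.ext hkey
      rw [this]
      exact hPΦM
    -- assemble
    refine ⟨J, ⟨hJc, fun a => ?_⟩, fun Φ => ⟨hfwd Φ, hbwd Φ⟩⟩
    refine ⟨fun ω => (orthogonalProjection (J ω) a : E),
      MIAux.stronglyMeasurable_proj hf a, fun ω => ⟨SetLike.coe_mem _, fun v hv => ?_⟩⟩
    dsimp only
    rw [show (orthogonalProjection (J ω) a : E) = (J ω).starProjection a from rfl,
      starProjection_minimal]
    exact ciInf_le ⟨0, fun x ⟨y, hy⟩ => hy ▸ norm_nonneg _⟩ (⟨v, hv⟩ : J ω)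
  · rintro ⟨J, _, hChar⟩
    intro Φ hΦ g hg Ψ hΨ
    rw [SetLike.mem_coe] at hΦ ⊢
    refine (hChar Ψ).2 ?_
    filter_upwards [hΨ, (hChar Φ).1 hΦ] with ω h1 h2
    rw [h1]
    exact Submodule.smul_mem _ _ h2
end
end

section
/- Let V ⊆ L²(X) be a closed subspace, where σ is a quasi-Γ-invariant action of the countable discrete LCA group Γ on (X, μ) with tiling set C. Then V is (Γ, σ)-invariant (i.e. Π_σ(γ)V ⊆ V for all γ ∈ Γ) if and only if its image Z_σ[V] ⊆ L²(Γ̂, L²(C)) under the generalized Zak transform is multiplicatively invariant with respect to the determining set D = {X_γ}_{γ∈Γ}. -/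
open MeasureTheory

/-- A closed subspace `V ⊆ L²(X)` is `(Γ,σ)`-invariant if and only if its image under the
generalized Zak transform is a multiplicatively invariant subspace of `L²(Γ̂, L²(C))`
with respect to the determining set of characters `D = {X_γ}_{γ∈Γ}`. -/
theorem gamma_sigma_invariant_iff_MI
    {X : Type*} [MeasurableSpace X] (μ : Measure X) [SigmaFinite μ]
    (C : Set X) (hCmeas : MeasurableSet C)
    {Γ : Type*} [AddCommGroup Γ] [Countable Γ]
    -- the dual group Γ̂ with its normalized Haar measure and characters
    {Γh : Type*} [MeasurableSpace Γh] (mh : Measure Γh) [IsProbabilityMeasure mh]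
    (χ : Γ → Γh → ℂ)
    (hχmeas : ∀ γ, Measurable (χ γ))
    (hχadd : ∀ γ γ' α, χ (γ + γ') α = χ γ α * χ γ' α)
    (hχnorm : ∀ γ α, ‖χ γ α‖ = 1)
    (hχdet : ∀ f : Γh → ℂ, Integrable f mh →
      (∀ γ : Γ, ∫ α, f α * χ γ α ∂mh = 0) → f =ᵐ[mh] 0)
    -- the unitary representation Π_σ of Γ on L²(X)
    (Pi : Γ → (Lp ℂ 2 μ ≃ₗᵢ[ℂ] Lp ℂ 2 μ))
    (hPiadd : ∀ γ γ' (f : Lp ℂ 2 μ), Pi γ (Pi γ' f) = Pi (γ + γ') f)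
    -- the generalized Zak transform: an isometric isomorphism intertwining Π_σ with
    -- multiplication by the characters
    (Z : Lp ℂ 2 μ ≃ₗᵢ[ℂ] Lp (Lp ℂ 2 (μ.restrict C)) 2 mh)
    (hZPi : ∀ (γ : Γ) (f : Lp ℂ 2 μ),
      ⇑(Z (Pi γ f)) =ᵐ[mh] fun α => χ γ α • (⇑(Z f) α))
    -- a closed subspace of L²(X)
    (V : Submodule ℂ (Lp ℂ 2 μ)) (hV : IsClosed (V : Set (Lp ℂ 2 μ))) :
    (∀ γ : Γ, ∀ f ∈ V, Pi γ f ∈ V) ↔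
      IsMISpace mh {g | ∃ γ : Γ, g = χ γ} (⇑Z '' (V : Set (Lp ℂ 2 μ))) := by
  constructor
  · rintro hinv Φ ⟨f, hf, rfl⟩ g ⟨γ, rfl⟩ Ψ hΨ
    have h1 : Ψ = Z (Pi γ f) := by
      apply Lp.ext
      exact hΨ.trans (hZPi γ f).symm
    exact ⟨Pi γ f, hinv γ f hf, h1.symm⟩
  · intro hMI γ f hf
    obtain ⟨h, hh, hZh⟩ := hMI (Z f) ⟨f, hf, rfl⟩ (χ γ) ⟨γ, rfl⟩ (Z (Pi γ f)) (hZPi γ f)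
    have : h = Pi γ f := Z.injective hZh
    exact this ▸ hh
end

section
/- Let V ⊆ L²(X) be a closed subspace. Then V is (Γ, σ)-invariant if and only if there exists a measurable range function J : Γ̂ → {closed subspaces of L²(C)} such that V = {f ∈ L²(X) : Z_σ[f](α) ∈ J(α) for a.e. α ∈ Γ̂}. Moreover, identifying range functions equal almost everywhere, this correspondence between (Γ, σ)-invariant spaces and measurable range functions is bijective, and if V = S_σ^Γ(A) for a countable set A ⊆ L²(X) then J(α) = closure of span{Z_σ[φ](α) : φ ∈ A} for a.e. α. -/
open MeasureTheory

open MeasureTheory Filter Topology Set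
open scoped ENNReal

namespace GSIAux

variable {Ω H : Type*} [MeasurableSpace Ω] [NormedAddCommGroup H] [InnerProductSpace ℂ H]

/-- Measurable nearest-point selection for a measurably-generated family of closed
submodules. -/
theorem exists_measurable_nearest [CompleteSpace H] [SecondCountableTopology H]
    (u : ℕ → Ω → H) (hu : ∀ n, StronglyMeasurable (u n))
    (J : Ω → Submodule ℂ H) (hJc : ∀ ω, IsClosed (J ω : Set H))
    (hmem : ∀ n ω, u n ω ∈ J ω)
    (hdense : ∀ ω, (J ω : Set H) ⊆ closure (Set.range fun n => u n ω))
    (a : H) :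
    ∃ p : Ω → H, StronglyMeasurable p ∧ ∀ ω, p ω ∈ J ω ∧ ∀ v ∈ J ω, ‖a - p ω‖ ≤ ‖a - v‖ := by
  classical
  borelize H
  set d : Ω → ℝ := fun ω => ⨅ n, ‖a - u n ω‖ with hd
  have hbdd : ∀ ω, BddBelow (Set.range fun n => ‖a - u n ω‖) := fun ω =>
    ⟨0, by rintro x ⟨n, rfl⟩; positivity⟩
  have hd_le : ∀ ω n, d ω ≤ ‖a - u n ω‖ := fun ω n => ciInf_le (hbdd ω) n
  have hd_nonneg : ∀ ω, 0 ≤ d ω := fun ω => le_ciInf fun n => norm_nonneg _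
  have hd_lb : ∀ ω, ∀ v ∈ J ω, d ω ≤ ‖a - v‖ := by
    intro ω v hv
    refine le_of_forall_pos_le_add fun ε hε => ?_
    obtain ⟨w, hw, hwd⟩ := Metric.mem_closure_iff.1 (hdense ω hv) ε hε
    obtain ⟨n, rfl⟩ := hw
    calc d ω ≤ ‖a - u n ω‖ := hd_le ω n
      _ = ‖(a - v) + (v - u n ω)‖ := by rw [sub_add_sub_cancel]
      _ ≤ ‖a - v‖ + ‖v - u n ω‖ := norm_add_le _ _
      _ ≤ ‖a - v‖ + ε := by
          have : ‖v - u n ω‖ = dist v (u n ω) := (dist_eq_norm _ _).symm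
          rw [this]; linarith [hwd.le]
  have hex : ∀ (k : ℕ) (ω : Ω), ∃ n, ‖a - u n ω‖ < d ω + 1 / (k + 1 : ℝ) := by
    intro k ω
    exact exists_lt_of_ciInf_lt (lt_add_of_pos_right _ (by positivity))
  set q : ℕ → Ω → H := fun k ω => u (Nat.find (hex k ω)) ω with hq
  have hq_spec : ∀ k ω, ‖a - q k ω‖ < d ω + 1 / (k + 1 : ℝ) := fun k ω => Nat.find_spec (hex k ω)
  have hq_mem : ∀ k ω, q k ω ∈ J ω := fun k ω => hmem _ ω
  have hnorm_meas : ∀ n, Measurable fun ω => ‖a - u n ω‖ :=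
    fun n => (stronglyMeasurable_const.sub (hu n)).norm.measurable
  have hd_meas : Measurable d := Measurable.iInf hnorm_meas
  have hq_sm : ∀ k, StronglyMeasurable (q k) := by
    intro k
    refine Measurable.stronglyMeasurable ?_
    exact Measurable.find (fun n => (hu n).measurable)
      (fun n => measurableSet_lt (hnorm_meas n) (hd_meas.add_const _)) (hex k)
  -- parallelogram estimate
  have key : ∀ ω j k, ‖q j ω - q k ω‖ ^ 2 ≤
      2 * (d ω + 1 / (j + 1 : ℝ)) ^ 2 + 2 * (d ω + 1 / (k + 1 : ℝ)) ^ 2 - 4 * d ω ^ 2 := by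
    intro ω j k
    have hpar := parallelogram_law_with_norm ℂ (a - q j ω) (a - q k ω)
    set m : H := ((2 : ℂ)⁻¹) • (q j ω + q k ω) with hm
    have hmJ : m ∈ J ω := Submodule.smul_mem _ _ (Submodule.add_mem _ (hq_mem j ω) (hq_mem k ω))
    have h2 : (a - q j ω) + (a - q k ω) = (2 : ℂ) • (a - m) := by
      rw [hm, smul_sub, smul_smul]
      norm_num
      module
    have h3 : ‖(a - q j ω) + (a - q k ω)‖ = 2 * ‖a - m‖ := by
      rw [h2, norm_smul]; simp
    have h4 : (a - q j ω) - (a - q k ω) = q k ω - q j ω := by abel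
    have h5 : d ω ≤ ‖a - m‖ := hd_lb ω m hmJ
    have h6 : ‖a - q j ω‖ < d ω + 1 / (j + 1 : ℝ) := hq_spec j ω
    have h7 : ‖a - q k ω‖ < d ω + 1 / (k + 1 : ℝ) := hq_spec k ω
    have h8 : ‖q j ω - q k ω‖ = ‖q k ω - q j ω‖ := norm_sub_rev _ _
    rw [h4, h3] at hpar
    have e1 : ‖a - q j ω‖ ^ 2 ≤ (d ω + 1 / (j + 1 : ℝ)) ^ 2 :=
      pow_le_pow_left₀ (norm_nonneg _) h6.le 2
    have e2 : ‖a - q k ω‖ ^ 2 ≤ (d ω + 1 / (k + 1 : ℝ)) ^ 2 :=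
      pow_le_pow_left₀ (norm_nonneg _) h7.le 2
    have e3 : (2 * d ω) ^ 2 ≤ (2 * ‖a - m‖) ^ 2 :=
      pow_le_pow_left₀ (by linarith [hd_nonneg ω]) (by linarith) 2
    rw [pow_two, h8, ← pow_two]
    nlinarith [e1, e2, e3, hpar]
  have hcau : ∀ ω, CauchySeq fun k => q k ω := by
    intro ω
    have hb0 : Tendsto (fun N : ℕ => Real.sqrt ((8 * d ω + 4) / (N + 1))) atTop (𝓝 0) := by
      have h1 : Tendsto (fun N : ℕ => (8 * d ω + 4) * (1 / (N + 1 : ℝ))) atTop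
          (𝓝 ((8 * d ω + 4) * 0)) :=
        tendsto_one_div_add_atTop_nhds_zero_nat.const_mul _
      have h1' : Tendsto (fun N : ℕ => (8 * d ω + 4) / (N + 1 : ℝ)) atTop (𝓝 0) := by
        simpa [div_eq_mul_inv] using h1
      simpa [Function.comp_def] using (Real.continuous_sqrt.tendsto 0).comp h1'
    refine cauchySeq_of_le_tendsto_0 _ (fun j k N hj hk => ?_) hb0
    have hδ : ∀ i : ℕ, N ≤ i → 1 / (i + 1 : ℝ) ≤ 1 / (N + 1 : ℝ) := by
      intro i hi
      have : (N : ℝ) + 1 ≤ (i : ℝ) + 1 := by exact_mod_cast Nat.succ_le_succ hi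
      exact one_div_le_one_div_of_le (by positivity) this
    have hδ1 : ∀ i : ℕ, 1 / (i + 1 : ℝ) ≤ 1 := by
      intro i
      rw [div_le_one (by positivity)]
      linarith [Nat.cast_nonneg (α := ℝ) i]
    have hsq : ‖q j ω - q k ω‖ ^ 2 ≤ (8 * d ω + 4) / (N + 1) := by
      have h := key ω j k
      have hj' := hδ j hj
      have hk' := hδ k hk
      have hj1 := hδ1 j
      have hk1 := hδ1 k
      have hjpos : (0:ℝ) < 1 / (j + 1 : ℝ) := by positivity
      have hkpos : (0:ℝ) < 1 / (k + 1 : ℝ) := by positivity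
      have hNpos : (0:ℝ) < 1 / (N + 1 : ℝ) := by positivity
      have expand : 2 * (d ω + 1 / (j + 1 : ℝ)) ^ 2 + 2 * (d ω + 1 / (k + 1 : ℝ)) ^ 2
          - 4 * d ω ^ 2 = 4 * d ω * (1 / (j+1:ℝ) + 1 / (k+1:ℝ)) + 2 * (1/(j+1:ℝ))^2
            + 2 * (1/(k+1:ℝ))^2 := by ring
      rw [expand] at h
      have : (8 * d ω + 4) / (N + 1) = (8 * d ω) * (1 / (N+1:ℝ)) + 4 * (1 / (N+1:ℝ)) := by
        ring
      rw [this]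
      nlinarith [hd_nonneg ω]
    rw [dist_eq_norm]
    calc ‖q j ω - q k ω‖ = Real.sqrt (‖q j ω - q k ω‖ ^ 2) := by
          rw [Real.sqrt_sq (norm_nonneg _)]
      _ ≤ Real.sqrt ((8 * d ω + 4) / (N + 1)) := Real.sqrt_le_sqrt hsq
  have hconv : ∀ ω, ∃ x, Tendsto (fun k => q k ω) atTop (𝓝 x) := fun ω =>
    cauchySeq_tendsto_of_complete (hcau ω)
  choose p hp using hconv
  refine ⟨p, ?_, ?_⟩
  · exact stronglyMeasurable_of_tendsto atTop hq_sm (tendsto_pi_nhds.2 hp)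
  · intro ω
    have hpJ : p ω ∈ J ω :=
      (hJc ω).mem_of_tendsto (hp ω) (Eventually.of_forall fun k => hq_mem k ω)
    refine ⟨hpJ, fun v hv => ?_⟩
    have h1 : Tendsto (fun k => ‖a - q k ω‖) atTop (𝓝 ‖a - p ω‖) :=
      (tendsto_const_nhds.sub (hp ω)).norm
    have h2 : Tendsto (fun k : ℕ => d ω + 1 / (k + 1 : ℝ)) atTop (𝓝 (d ω)) := by
      simpa using (tendsto_const_nhds : Tendsto (fun _ : ℕ => d ω) atTop (𝓝 (d ω))).add tendsto_one_div_add_atTop_nhds_zero_nat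
    have h3 : ‖a - p ω‖ ≤ d ω :=
      le_of_tendsto_of_tendsto' h1 h2 fun k => (hq_spec k ω).le
    exact h3.trans (hd_lb ω v hv)


/-- rational complex numbers -/
noncomputable def rc (p : ℚ × ℚ) : ℂ := (p.1 : ℂ) + (p.2 : ℂ) * Complex.I

noncomputable def pmul (p q : ℚ × ℚ) : ℚ × ℚ := (p.1 * q.1 - p.2 * q.2, p.1 * q.2 + p.2 * q.1)

lemma rc_pmul (p q : ℚ × ℚ) : rc (pmul p q) = rc p * rc q := by
  simp only [rc, pmul]
  push_cast
  ring_nf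
  rw [Complex.I_sq]
  ring

lemma rc_dense (z : ℂ) : ∃ c : ℕ → ℚ × ℚ, Tendsto (fun m => rc (c m)) atTop (𝓝 z) := by
  have hre : z.re ∈ closure (Set.range ((↑) : ℚ → ℝ)) := by
    rw [Rat.denseRange_cast.closure_eq]; trivial
  have him : z.im ∈ closure (Set.range ((↑) : ℚ → ℝ)) := by
    rw [Rat.denseRange_cast.closure_eq]; trivial
  obtain ⟨f, hfmem, hf⟩ := mem_closure_iff_seq_limit.1 hre
  obtain ⟨g, hgmem, hg⟩ := mem_closure_iff_seq_limit.1 him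
  choose q hq using hfmem
  choose r hr using hgmem
  refine ⟨fun m => (q m, r m), ?_⟩
  have h1 : Tendsto (fun m => ((q m : ℝ) : ℂ)) atTop (𝓝 (z.re : ℂ)) := by
    exact (Complex.continuous_ofReal.tendsto _).comp (by simpa [hq] using hf)
  have h2 : Tendsto (fun m => ((r m : ℝ) : ℂ)) atTop (𝓝 (z.im : ℂ)) := by
    exact (Complex.continuous_ofReal.tendsto _).comp (by simpa [hr] using hg)
  have := h1.add (h2.mul_const Complex.I)
  simp only [rc]
  simpa only [Complex.ofReal_ratCast, Complex.re_add_im] using this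

noncomputable def combo (g : ℕ → H) (l : List ((ℚ × ℚ) × ℕ)) : H :=
  (l.map fun t => rc t.1 • g t.2).sum

lemma combo_mem (g : ℕ → H) (l : List ((ℚ × ℚ) × ℕ)) :
    combo g l ∈ Submodule.span ℂ (Set.range g) := by
  induction l with
  | nil => simpa [combo] using Submodule.zero_mem _
  | cons t l ih =>
    simp only [combo, List.map_cons, List.sum_cons] at *
    exact Submodule.add_mem _ (Submodule.smul_mem _ _ (Submodule.subset_span ⟨t.2, rfl⟩)) ih

lemma combo_append (g : ℕ → H) (l₁ l₂ : List ((ℚ × ℚ) × ℕ)) :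
    combo g (l₁ ++ l₂) = combo g l₁ + combo g l₂ := by
  simp [combo]

lemma combo_smul (g : ℕ → H) (p : ℚ × ℚ) (l : List ((ℚ × ℚ) × ℕ)) :
    combo g (l.map fun t => (pmul p t.1, t.2)) = rc p • combo g l := by
  induction l with
  | nil => simp [combo]
  | cons t l ih =>
    simp only [combo, List.map_cons, List.sum_cons] at *
    rw [ih, rc_pmul, smul_add, smul_smul]

lemma combo_stronglyMeasurable {Ω : Type*} [MeasurableSpace Ω] (g : ℕ → Ω → H)
    (hg : ∀ n, StronglyMeasurable (g n)) (l : List ((ℚ × ℚ) × ℕ)) :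
    StronglyMeasurable (fun ω => combo (fun m => g m ω) l) := by
  induction l with
  | nil => simpa [combo] using stronglyMeasurable_const
  | cons t l ih =>
    simp only [combo, List.map_cons, List.sum_cons] at *
    exact ((hg t.2).const_smul _).add ih

lemma span_subset_closure_combo (g : ℕ → H) :
    (Submodule.span ℂ (Set.range g) : Set H) ⊆ closure (Set.range (combo g)) := by
  intro x hx
  induction hx using Submodule.span_induction with
  | mem x hx =>
    obtain ⟨n, rfl⟩ := hx
    exact subset_closure ⟨[((1, 0), n)], by simp [combo, rc]⟩
  | zero => exact subset_closure ⟨[], by simp [combo]⟩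
  | add x y hx hy ihx ihy =>
    obtain ⟨s1, hs1, hls1⟩ := mem_closure_iff_seq_limit.1 ihx
    obtain ⟨s2, hs2, hls2⟩ := mem_closure_iff_seq_limit.1 ihy
    choose l1 hl1 using hs1
    choose l2 hl2 using hs2
    refine mem_closure_iff_seq_limit.2 ⟨fun m => s1 m + s2 m, fun m => ?_, hls1.add hls2⟩
    exact ⟨l1 m ++ l2 m, by rw [combo_append, hl1, hl2]⟩
  | smul c x hx ihx =>
    obtain ⟨s1, hs1, hls1⟩ := mem_closure_iff_seq_limit.1 ihx
    choose l1 hl1 using hs1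
    obtain ⟨cm, hcm⟩ := rc_dense c
    refine mem_closure_iff_seq_limit.2 ⟨fun m => rc (cm m) • s1 m, fun m => ?_, hcm.smul hls1⟩
    exact ⟨(l1 m).map fun t => (pmul (cm m) t.1, t.2), by rw [combo_smul, hl1]⟩


/-- The range function generated by countably many measurable sections is measurable. -/
theorem rangeFun_meas [CompleteSpace H] [SecondCountableTopology H]
    (g : ℕ → Ω → H) (hg : ∀ n, StronglyMeasurable (g n)) :
    IsMeasurableRangeFunction
      (fun ω => (Submodule.span ℂ (Set.range fun n => g n ω)).topologicalClosure) := by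
  classical
  obtain ⟨e, he⟩ := exists_surjective_nat (List ((ℚ × ℚ) × ℕ))
  refine ⟨fun ω => Submodule.isClosed_topologicalClosure _, fun a => ?_⟩
  refine exists_measurable_nearest (fun n ω => combo (fun m => g m ω) (e n))
    (fun n => combo_stronglyMeasurable g hg (e n)) _
    (fun ω => Submodule.isClosed_topologicalClosure _)
    (fun n ω => Submodule.le_topologicalClosure _ (combo_mem _ _)) (fun ω => ?_) a
  have hr : (Set.range fun n => combo (fun m => g m ω) (e n))
      = Set.range (combo fun m => g m ω) := by
    ext v
    constructor
    · rintro ⟨n, rfl⟩; exact ⟨e n, rfl⟩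
    · rintro ⟨l, rfl⟩
      obtain ⟨n, rfl⟩ := he l
      exact ⟨n, rfl⟩
  rw [hr, Submodule.topologicalClosure_coe]
  calc closure ((Submodule.span ℂ (Set.range fun n => g n ω) : Set H))
      ⊆ closure (closure (Set.range (combo fun m => g m ω))) :=
        closure_mono (span_subset_closure_combo _)
    _ = closure (Set.range (combo fun m => g m ω)) := closure_closure

lemma rangeFun_bot : IsMeasurableRangeFunction (fun _ : Ω => (⊥ : Submodule ℂ H)) := by
  constructor
  · intro ω
    rw [Submodule.bot_coe]
    exact isClosed_singleton
  · intro a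
    refine ⟨fun _ => 0, stronglyMeasurable_const, fun ω => ⟨Submodule.zero_mem _, ?_⟩⟩
    intro v hv
    have hv0 : v = 0 := (Submodule.mem_bot ℂ).1 hv
    simp [hv0]

variable {X : Type*} [MeasurableSpace X] {μ : Measure X} {C : Set X}
  {Γh : Type*} [MeasurableSpace Γh] {mh : Measure Γh}

/-- The space of `f` whose Zak transform lies a.e. in `J α`. -/
noncomputable def memSub (Z : Lp ℂ 2 μ ≃ₗᵢ[ℂ] Lp (Lp ℂ 2 (μ.restrict C)) 2 mh)
    (J : Γh → Submodule ℂ (Lp ℂ 2 (μ.restrict C))) : Submodule ℂ (Lp ℂ 2 μ) where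
  carrier := {f | ∀ᵐ α ∂mh, (Z f) α ∈ J α}
  add_mem' := by
    intro f g hf hg
    have hZ : ⇑(Z (f + g)) =ᵐ[mh] ⇑(Z f) + ⇑(Z g) := by
      rw [map_add]; exact Lp.coeFn_add _ _
    filter_upwards [hf, hg, hZ] with α h1 h2 h3
    rw [h3, Pi.add_apply]
    exact Submodule.add_mem _ h1 h2
  zero_mem' := by
    have hZ : ⇑(Z 0) =ᵐ[mh] 0 := by rw [map_zero]; exact Lp.coeFn_zero _ _ _
    filter_upwards [hZ] with α h
    rw [h, Pi.zero_apply]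
    exact Submodule.zero_mem _
  smul_mem' := by
    intro c f hf
    have hZ : ⇑(Z (c • f)) =ᵐ[mh] c • ⇑(Z f) := by
      rw [_root_.map_smul]; exact Lp.coeFn_smul _ _
    filter_upwards [hf, hZ] with α h1 h2
    rw [h2, Pi.smul_apply]
    exact Submodule.smul_mem _ _ h1

lemma mem_memSub {Z : Lp ℂ 2 μ ≃ₗᵢ[ℂ] Lp (Lp ℂ 2 (μ.restrict C)) 2 mh}
    {J : Γh → Submodule ℂ (Lp ℂ 2 (μ.restrict C))} {f : Lp ℂ 2 μ} :
    f ∈ memSub Z J ↔ ∀ᵐ α ∂mh, (Z f) α ∈ J α := Iff.rfl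

lemma memSub_isClosed (Z : Lp ℂ 2 μ ≃ₗᵢ[ℂ] Lp (Lp ℂ 2 (μ.restrict C)) 2 mh)
    (J : Γh → Submodule ℂ (Lp ℂ 2 (μ.restrict C)))
    (hJc : ∀ α, IsClosed (J α : Set (Lp ℂ 2 (μ.restrict C)))) :
    IsClosed ((memSub Z J : Submodule ℂ (Lp ℂ 2 μ)) : Set (Lp ℂ 2 μ)) := by
  refine IsSeqClosed.isClosed ?_
  intro f f₀ hf hf₀
  have hZt : Tendsto (fun n => Z (f n)) atTop (𝓝 (Z f₀)) :=
    (Z.continuous.tendsto _).comp hf₀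
  have him : TendstoInMeasure mh (fun n => ⇑(Z (f n))) atTop ⇑(Z f₀) :=
    tendstoInMeasure_of_tendsto_Lp hZt
  obtain ⟨ns, -, hns⟩ := him.exists_seq_tendsto_ae
  have hall : ∀ᵐ α ∂mh, ∀ k, (Z (f (ns k))) α ∈ J α := ae_all_iff.2 fun k => hf (ns k)
  filter_upwards [hall, hns] with α h1 h2
  exact (hJc α).mem_of_tendsto h2 (Eventually.of_forall fun k => h1 k)


lemma le_of_nearest {H : Type*} [NormedAddCommGroup H] [InnerProductSpace ℂ H]
    (K L : Submodule ℂ H) (hL : IsClosed (L : Set H)) (D : Set H) (hD : Dense D)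
    (p : H → H)
    (hpK : ∀ a ∈ D, p a ∈ K)
    (hmin : ∀ a ∈ D, ∀ v ∈ K, ‖a - p a‖ ≤ ‖a - v‖)
    (hpL : ∀ a ∈ D, p a ∈ L) : K ≤ L := by
  intro v hv
  have hvD : v ∈ closure D := by rw [hD.closure_eq]; trivial
  obtain ⟨s, hsD, hsv⟩ := mem_closure_iff_seq_limit.1 hvD
  have hlim : Filter.Tendsto (fun m => p (s m)) Filter.atTop (nhds v) := by
    rw [tendsto_iff_norm_sub_tendsto_zero]
    have hb : ∀ m, ‖p (s m) - v‖ ≤ 2 * ‖s m - v‖ := by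
      intro m
      have h1 : ‖s m - p (s m)‖ ≤ ‖s m - v‖ := hmin _ (hsD m) v hv
      calc ‖p (s m) - v‖ = ‖(p (s m) - s m) + (s m - v)‖ := by rw [sub_add_sub_cancel]
        _ ≤ ‖p (s m) - s m‖ + ‖s m - v‖ := norm_add_le _ _
        _ ≤ 2 * ‖s m - v‖ := by rw [norm_sub_rev]; linarith
    have hz : Filter.Tendsto (fun m => 2 * ‖s m - v‖) Filter.atTop (nhds 0) := by
      have h0 : Filter.Tendsto (fun m => ‖s m - v‖) Filter.atTop (nhds 0) :=
        tendsto_iff_norm_sub_tendsto_zero.1 hsv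
      simpa using h0.const_mul 2
    exact squeeze_zero (fun m => norm_nonneg _) hb hz
  exact hL.mem_of_tendsto hlim (Filter.Eventually.of_forall fun m => hpL _ (hsD m))


end GSIAux

set_option maxHeartbeats 2000000 in
/-- Characterization of `(Γ,σ)`-invariant subspaces of `L²(X)` in terms of measurable
range functions and the generalized Zak transform, together with the bijectivity of the
correspondence and the formula for the range function of a generated space. -/
theorem gamma_sigma_invariant_characterization
    {X : Type*} [MeasurableSpace X] (μ : Measure X) [SigmaFinite μ]
    (C : Set X) (hCmeas : MeasurableSet C)
    {Γ : Type*} [AddCommGroup Γ] [Countable Γ]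
    {Γh : Type*} [MeasurableSpace Γh] (mh : Measure Γh) [IsProbabilityMeasure mh]
    (χ : Γ → Γh → ℂ)
    (hχmeas : ∀ γ, Measurable (χ γ))
    (hχadd : ∀ γ γ' α, χ (γ + γ') α = χ γ α * χ γ' α)
    (hχnorm : ∀ γ α, ‖χ γ α‖ = 1)
    (hχdet : ∀ f : Γh → ℂ, Integrable f mh →
      (∀ γ : Γ, ∫ α, f α * χ γ α ∂mh = 0) → f =ᵐ[mh] 0)
    [TopologicalSpace.SeparableSpace (Lp ℂ 2 μ)]  -- L²(X) is separable
    (Pi : Γ → (Lp ℂ 2 μ ≃ₗᵢ[ℂ] Lp ℂ 2 μ))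
    (hPiadd : ∀ γ γ' (f : Lp ℂ 2 μ), Pi γ (Pi γ' f) = Pi (γ + γ') f)
    (Z : Lp ℂ 2 μ ≃ₗᵢ[ℂ] Lp (Lp ℂ 2 (μ.restrict C)) 2 mh)
    (hZPi : ∀ (γ : Γ) (f : Lp ℂ 2 μ),
      ⇑(Z (Pi γ f)) =ᵐ[mh] fun α => χ γ α • (⇑(Z f) α))
    (V : Submodule ℂ (Lp ℂ 2 μ)) (hV : IsClosed (V : Set (Lp ℂ 2 μ))) :
    -- (1) ↔ (2)
    ((∀ γ : Γ, ∀ f ∈ V, Pi γ f ∈ V) ↔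
      ∃ J : Γh → Submodule ℂ (Lp ℂ 2 (μ.restrict C)), IsMeasurableRangeFunction J ∧
        ∀ f : Lp ℂ 2 μ, f ∈ V ↔ ∀ᵐ α ∂mh, (Z f) α ∈ J α) ∧
    -- the correspondence is one-to-one (identifying range functions equal a.e.)
    (∀ J₁ J₂ : Γh → Submodule ℂ (Lp ℂ 2 (μ.restrict C)),
      IsMeasurableRangeFunction J₁ → IsMeasurableRangeFunction J₂ →
      (∀ f : Lp ℂ 2 μ, (∀ᵐ α ∂mh, (Z f) α ∈ J₁ α) ↔ (∀ᵐ α ∂mh, (Z f) α ∈ J₂ α)) →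
      ∀ᵐ α ∂mh, J₁ α = J₂ α) ∧
    -- and onto: every measurable range function arises from a (Γ,σ)-invariant space
    (∀ J : Γh → Submodule ℂ (Lp ℂ 2 (μ.restrict C)), IsMeasurableRangeFunction J →
      ∃ W : Submodule ℂ (Lp ℂ 2 μ), IsClosed (W : Set (Lp ℂ 2 μ)) ∧
        (∀ γ : Γ, ∀ f ∈ W, Pi γ f ∈ W) ∧
        ∀ f : Lp ℂ 2 μ, f ∈ W ↔ ∀ᵐ α ∂mh, (Z f) α ∈ J α) ∧
    -- if V = S_σ^Γ(A), the range function is α ↦ closure span {Z[φ](α) : φ ∈ A}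
    (∀ A : Set (Lp ℂ 2 μ), A.Countable →
      V = (Submodule.span ℂ {g | ∃ φ ∈ A, ∃ γ : Γ, g = Pi γ φ}).topologicalClosure →
      ∃ J : Γh → Submodule ℂ (Lp ℂ 2 (μ.restrict C)), IsMeasurableRangeFunction J ∧
        (∀ f : Lp ℂ 2 μ, f ∈ V ↔ ∀ᵐ α ∂mh, (Z f) α ∈ J α) ∧
        ∀ᵐ α ∂mh, J α =
          (Submodule.span ℂ {v | ∃ φ ∈ A, v = (Z φ) α}).topologicalClosure) := by
  classical
  haveI hSC1 : SecondCountableTopology (Lp ℂ 2 μ) :=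
    UniformSpace.secondCountable_of_separable _
  haveI hSC2 : SecondCountableTopology (Lp (Lp ℂ 2 (μ.restrict C)) 2 mh) :=
    (Z.symm.isometry.isEmbedding).secondCountableTopology
  haveI hSCH : SecondCountableTopology (Lp ℂ 2 (μ.restrict C)) := by
    have hnorm : ∀ x : Lp ℂ 2 (μ.restrict C),
        ‖Lp.const (α := Γh) 2 mh x‖ = ‖x‖ := by
      intro x
      have hc := Lp.norm_const' (p := (2 : ℝ≥0∞)) (μ := mh) (c := x)
        (by norm_num) (by norm_num)
      rw [hc]
      simp [measure_univ]
    have hiso : Isometry (⇑(Lp.const (α := Γh) (E := Lp ℂ 2 (μ.restrict C)) 2 mh)) :=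
      AddMonoidHomClass.isometry_of_norm _ hnorm
    exact hiso.isEmbedding.secondCountableTopology
  -- basic character facts
  have hχ0 : ∀ α, χ 0 α = 1 := by
    intro α
    have h1 := hχadd 0 0 α
    rw [add_zero] at h1
    have h2 : χ 0 α ≠ 0 := by
      intro h
      have := hχnorm 0 α
      rw [h] at this
      simp at this
    have h3 : χ 0 α * 1 = χ 0 α * χ 0 α := by rw [mul_one]; exact h1
    exact (mul_left_cancel₀ h2 h3).symm
  have hχconj : ∀ (γ : Γ) (α : Γh), (starRingEnd ℂ) (χ γ α) = χ (-γ) α := by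
    intro γ α
    have hmul : χ γ α * χ (-γ) α = 1 := by rw [← hχadd, add_neg_cancel, hχ0]
    have hinv : (χ γ α)⁻¹ = χ (-γ) α := inv_eq_of_mul_eq_one_right hmul
    rw [← hinv]
    exact (RCLike.inv_eq_conj (hχnorm γ α)).symm
  have hPi0 : ∀ f : Lp ℂ 2 μ, Pi (0 : Γ) f = f := by
    intro f
    have h := hPiadd 0 0 f
    rw [add_zero] at h
    exact (Pi 0).injective h
  -- invariance of memSub
  have hmemSub_inv : ∀ (J : Γh → Submodule ℂ (Lp ℂ 2 (μ.restrict C))) (γ : Γ)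
      (f : Lp ℂ 2 μ), f ∈ GSIAux.memSub Z J → Pi γ f ∈ GSIAux.memSub Z J := by
    intro J γ f hf
    rw [GSIAux.mem_memSub] at hf ⊢
    filter_upwards [hf, hZPi γ f] with α h1 h2
    rw [h2]
    exact Submodule.smul_mem _ _ h1
  -- THE CORE LEMMA
  have core : ∀ A : Set (Lp ℂ 2 μ), A.Countable →
      ∃ J : Γh → Submodule ℂ (Lp ℂ 2 (μ.restrict C)), IsMeasurableRangeFunction J ∧
        (∀ f : Lp ℂ 2 μ,
          f ∈ (Submodule.span ℂ {g | ∃ φ ∈ A, ∃ γ : Γ, g = Pi γ φ}).topologicalClosure ↔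
            ∀ᵐ α ∂mh, (Z f) α ∈ J α) ∧
        (∀ α, J α = (Submodule.span ℂ {v | ∃ φ ∈ A, v = (Z φ) α}).topologicalClosure) := by
    intro A hA
    rcases A.eq_empty_or_nonempty with rfl | hne
    · -- empty generating set
      have hset1 : {g : Lp ℂ 2 μ | ∃ φ ∈ (∅ : Set (Lp ℂ 2 μ)), ∃ γ : Γ, g = Pi γ φ} = ∅ := by
        ext g; simp
      have hclosure_bot : (⊥ : Submodule ℂ (Lp ℂ 2 μ)).topologicalClosure = ⊥ :=
        IsClosed.submodule_topologicalClosure_eq (by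
          rw [Submodule.bot_coe]; exact isClosed_singleton)
      have hclosure_bot' : (⊥ : Submodule ℂ (Lp ℂ 2 (μ.restrict C))).topologicalClosure = ⊥ :=
        IsClosed.submodule_topologicalClosure_eq (by
          rw [Submodule.bot_coe]; exact isClosed_singleton)
      refine ⟨fun _ => ⊥, GSIAux.rangeFun_bot, ?_, ?_⟩
      · intro f
        rw [hset1, Submodule.span_empty, hclosure_bot, Submodule.mem_bot]
        constructor
        · intro h
          subst h
          have hZ : ⇑(Z 0) =ᵐ[mh] 0 := by rw [map_zero]; exact Lp.coeFn_zero _ _ _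
          filter_upwards [hZ] with α hα
          rw [hα]
          exact Submodule.zero_mem _
        · intro h
          have hZ0 : ⇑(Z f) =ᵐ[mh] ⇑(0 : Lp (Lp ℂ 2 (μ.restrict C)) 2 mh) := by
            filter_upwards [h, Lp.coeFn_zero (Lp ℂ 2 (μ.restrict C)) 2 mh] with α h1 h2
            rw [h2]
            exact (Submodule.mem_bot ℂ).1 h1
          have : Z f = 0 := Lp.ext hZ0
          have : Z f = Z 0 := by rw [this, map_zero]
          exact Z.injective this
      · intro α
        have hset2 : {v : Lp ℂ 2 (μ.restrict C) | ∃ φ ∈ (∅ : Set (Lp ℂ 2 μ)), v = (Z φ) α} = ∅ := by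
          ext v; simp
        rw [hset2, Submodule.span_empty, hclosure_bot']
    · -- nonempty generating set
      obtain ⟨φ, rfl⟩ := hA.exists_eq_range hne
      set J : Γh → Submodule ℂ (Lp ℂ 2 (μ.restrict C)) := fun α =>
        (Submodule.span ℂ (Set.range fun n => (Z (φ n)) α)).topologicalClosure with hJdef
      have hgen : ∀ α, {v : Lp ℂ 2 (μ.restrict C) | ∃ ψ ∈ Set.range φ, v = (Z ψ) α}
          = Set.range fun n => (Z (φ n)) α := by
        intro α
        ext v
        constructor
        · rintro ⟨ψ, ⟨n, rfl⟩, rfl⟩; exact ⟨n, rfl⟩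
        · rintro ⟨n, rfl⟩; exact ⟨φ n, ⟨n, rfl⟩, rfl⟩
      have hJmeas : IsMeasurableRangeFunction J :=
        GSIAux.rangeFun_meas (fun n α => (Z (φ n)) α) (fun n => Lp.stronglyMeasurable _)
      have hJc : ∀ α, IsClosed ((J α : Set (Lp ℂ 2 (μ.restrict C)))) := hJmeas.1
      set S : Set (Lp ℂ 2 μ) := {g | ∃ ψ ∈ Set.range φ, ∃ γ : Γ, g = Pi γ ψ} with hSdef
      set V₀ : Submodule ℂ (Lp ℂ 2 μ) := (Submodule.span ℂ S).topologicalClosure with hV₀def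
      -- easy inclusion
      have hbasic : ∀ n, ∀ᵐ α ∂mh, (Z (φ n)) α ∈ J α := by
        intro n
        refine Eventually.of_forall fun α => ?_
        exact Submodule.le_topologicalClosure _ (Submodule.subset_span ⟨n, rfl⟩)
      have hVW : V₀ ≤ GSIAux.memSub Z J := by
        apply Submodule.topologicalClosure_minimal
        · rw [Submodule.span_le]
          rintro g ⟨ψ, ⟨n, rfl⟩, γ, rfl⟩
          exact hmemSub_inv J γ (φ n) (hbasic n)
        · exact GSIAux.memSub_isClosed Z J hJc
      refine ⟨J, hJmeas, fun f => ⟨fun hf => hVW hf, ?_⟩, fun α => by rw [hgen α]⟩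
      -- hard inclusion
      intro hf
      haveI : CompleteSpace (↥V₀) := (Submodule.isClosed_topologicalClosure _).completeSpace_coe
      obtain ⟨g, hgV, h, hhV, hfgh⟩ := V₀.exists_add_mem_mem_orthogonal f
      have hhorth : ∀ (n : ℕ) (γ : Γ), inner (𝕜 := ℂ) (Pi γ (φ n)) h = (0 : ℂ) := by
        intro n γ
        refine (Submodule.mem_orthogonal _ _).1 hhV _ ?_
        exact Submodule.le_topologicalClosure _
          (Submodule.subset_span ⟨φ n, ⟨n, rfl⟩, γ, rfl⟩)
      have hw : ∀ n : ℕ,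
          (fun α => inner (𝕜 := ℂ) ((Z (φ n)) α) ((Z h) α)) =ᵐ[mh] 0 := by
        intro n
        have hint : Integrable (fun α => inner (𝕜 := ℂ) ((Z (φ n)) α) ((Z h) α)) mh :=
          L2.integrable_inner (𝕜 := ℂ) (Z (φ n)) (Z h)
        apply hχdet _ hint
        intro γ
        have h0 : (0 : ℂ) = inner (𝕜 := ℂ) (Z (Pi (-γ) (φ n))) (Z h) := by
          rw [LinearIsometryEquiv.inner_map_map]
          exact (hhorth n (-γ)).symm
        rw [L2.inner_def] at h0
        have heq : ∫ α, inner (𝕜 := ℂ) ((Z (Pi (-γ) (φ n))) α) ((Z h) α) ∂mh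
            = ∫ α, inner (𝕜 := ℂ) ((Z (φ n)) α) ((Z h) α) * χ γ α ∂mh := by
          refine integral_congr_ae ?_
          filter_upwards [hZPi (-γ) (φ n)] with α hα
          rw [hα, inner_smul_left, hχconj, neg_neg, mul_comm]
        rw [heq] at h0
        exact h0.symm
      have hZg : ∀ᵐ α ∂mh, (Z g) α ∈ J α := hVW hgV
      have hZh_sub : ⇑(Z h) =ᵐ[mh] ⇑(Z f) - ⇑(Z g) := by
        have hsub : Z h = Z f - Z g := by
          rw [← map_sub]
          congr 1
          rw [hfgh]
          abel
        rw [hsub]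
        exact Lp.coeFn_sub _ _
      have hw' : ∀ᵐ α ∂mh, ∀ n : ℕ,
          inner (𝕜 := ℂ) ((Z (φ n)) α) ((Z h) α) = (0 : ℂ) := by
        rw [ae_all_iff]
        intro n
        filter_upwards [hw n] with α hα
        exact hα
      have hmain : ∀ᵐ α ∂mh, (Z h) α = 0 := by
        filter_upwards [hf, hZg, hZh_sub, hw'] with α h1 h2 h3 h4
        have hhJ : (Z h) α ∈ J α := by
          rw [h3]
          exact Submodule.sub_mem _ h1 h2
        have horth : ∀ v ∈ J α, inner (𝕜 := ℂ) v ((Z h) α) = (0 : ℂ) := by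
          have hcl : (J α : Set (Lp ℂ 2 (μ.restrict C))) ⊆
              {v | inner (𝕜 := ℂ) v ((Z h) α) = (0 : ℂ)} := by
            rw [hJdef]
            show ((Submodule.span ℂ (Set.range fun n => (Z (φ n)) α)).topologicalClosure :
              Set (Lp ℂ 2 (μ.restrict C))) ⊆ _
            rw [Submodule.topologicalClosure_coe]
            refine closure_minimal ?_ (isClosed_eq (continuous_id.inner continuous_const)
              continuous_const)
            intro v hv
            induction hv using Submodule.span_induction with
            | mem x hx =>
              obtain ⟨n, rfl⟩ := hx
              exact h4 n
            | zero => simp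
            | add x y hx hy ihx ihy => rw [Set.mem_setOf_eq] at ihx ihy ⊢; rw [inner_add_left, ihx, ihy, add_zero]
            | smul c x hx ihx => rw [Set.mem_setOf_eq] at ihx ⊢; rw [inner_smul_left, ihx, mul_zero]
          exact fun v hv => hcl hv
        exact inner_self_eq_zero.1 (horth _ hhJ)
      have hZh0 : Z h = 0 := by
        apply Lp.ext
        filter_upwards [hmain, Lp.coeFn_zero (Lp ℂ 2 (μ.restrict C)) 2 mh] with α h1 h2
        rw [h1]
        exact h2.symm
      have hh0 : h = 0 := by
        have : Z h = Z 0 := by rw [hZh0, map_zero]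
        exact Z.injective this
      rw [hfgh, hh0, add_zero]
      exact hgV
  refine ⟨?_, ?_, ?_, ?_⟩
  · -- (1) invariance ↔ existence of a measurable range function
    constructor
    · intro hinv
      obtain ⟨D, hDc, hDd⟩ := TopologicalSpace.exists_countable_dense (↥V)
      set A : Set (Lp ℂ 2 μ) := Subtype.val '' D with hAdef
      have hAc : A.Countable := hDc.image _
      have hAV : A ⊆ (V : Set (Lp ℂ 2 μ)) := by
        rintro _ ⟨x, hx, rfl⟩
        exact x.2
      have hVeq : V =
          (Submodule.span ℂ {g | ∃ ψ ∈ A, ∃ γ : Γ, g = Pi γ ψ}).topologicalClosure := by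
        apply le_antisymm
        · intro f hf
          have h1 : (⟨f, hf⟩ : ↥V) ∈ closure D := by
            rw [hDd.closure_eq]; trivial
          have h2 : f ∈ closure (A : Set (Lp ℂ 2 μ)) := by
            have h3 := image_closure_subset_closure_image
              (f := (Subtype.val : ↥V → Lp ℂ 2 μ)) (s := D) continuous_subtype_val
            exact h3 ⟨_, h1, rfl⟩
          have h4 : closure (A : Set (Lp ℂ 2 μ)) ⊆ closure
              ((Submodule.span ℂ {g | ∃ ψ ∈ A, ∃ γ : Γ, g = Pi γ ψ} :
                Submodule ℂ (Lp ℂ 2 μ)) : Set (Lp ℂ 2 μ)) := by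
            apply closure_mono
            intro a ha
            exact Submodule.subset_span ⟨a, ha, 0, (hPi0 a).symm⟩
          have h5 := h4 h2
          rwa [← Submodule.topologicalClosure_coe, SetLike.mem_coe] at h5
        · refine Submodule.topologicalClosure_minimal _ ?_ hV
          rw [Submodule.span_le]
          rintro g ⟨ψ, hψ, γ, rfl⟩
          exact hinv γ ψ (hAV hψ)
      obtain ⟨J, hJm, hJch, -⟩ := core A hAc
      refine ⟨J, hJm, fun f => ?_⟩
      rw [hVeq]
      exact hJch f
    · rintro ⟨J, hJm, hJch⟩ γ f hf
      rw [hJch] at hf ⊢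
      filter_upwards [hf, hZPi γ f] with α h1 h2
      rw [h2]
      exact Submodule.smul_mem _ _ h1
  · -- (2) injectivity of the correspondence
    intro J₁ J₂ hJ1 hJ2 hsame
    obtain ⟨D, hDc, hDd⟩ := TopologicalSpace.exists_countable_dense (Lp ℂ 2 (μ.restrict C))
    choose p1 hp1 using hJ1.2
    choose p2 hp2 using hJ2.2
    have gen : ∀ (K L : Γh → Submodule ℂ (Lp ℂ 2 (μ.restrict C)))
        (p : Lp ℂ 2 (μ.restrict C) → Γh → Lp ℂ 2 (μ.restrict C)),
        (∀ a, StronglyMeasurable (p a) ∧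
          ∀ ω, p a ω ∈ K ω ∧ ∀ v ∈ K ω, ‖a - p a ω‖ ≤ ‖a - v‖) →
        (∀ f : Lp ℂ 2 μ, (∀ᵐ α ∂mh, (Z f) α ∈ K α) → (∀ᵐ α ∂mh, (Z f) α ∈ L α)) →
        ∀ a : Lp ℂ 2 (μ.restrict C), ∀ᵐ α ∂mh, p a α ∈ L α := by
      intro K L p hp himp a
      have hsm := (hp a).1
      have hbound : ∀ᵐ α ∂mh, ‖p a α‖ ≤ 2 * ‖a‖ := by
        refine Eventually.of_forall fun α => ?_
        have hmin := ((hp a).2 α).2 0 (Submodule.zero_mem _)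
        calc ‖p a α‖ = ‖(p a α - a) + a‖ := by rw [sub_add_cancel]
          _ ≤ ‖p a α - a‖ + ‖a‖ := norm_add_le _ _
          _ = ‖a - p a α‖ + ‖a‖ := by rw [norm_sub_rev]
          _ ≤ ‖a - 0‖ + ‖a‖ := by linarith
          _ = 2 * ‖a‖ := by rw [sub_zero]; ring
      have hmem : MemLp (p a) 2 mh :=
        MemLp.of_bound hsm.aestronglyMeasurable _ hbound
      have hcoe : ⇑(MemLp.toLp (p a) hmem) =ᵐ[mh] p a := MemLp.coeFn_toLp hmem
      have h1 : ∀ᵐ α ∂mh, (Z (Z.symm (MemLp.toLp (p a) hmem))) α ∈ K α := by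
        rw [Z.apply_symm_apply]
        filter_upwards [hcoe] with α hα
        rw [hα]
        exact ((hp a).2 α).1
      have h2 := himp _ h1
      rw [Z.apply_symm_apply] at h2
      filter_upwards [h2, hcoe] with α hα1 hα2
      rwa [hα2] at hα1
    have htr1 : ∀ a, ∀ᵐ α ∂mh, p1 a α ∈ J₂ α :=
      gen J₁ J₂ p1 hp1 (fun f => (hsame f).1)
    have htr2 : ∀ a, ∀ᵐ α ∂mh, p2 a α ∈ J₁ α :=
      gen J₂ J₁ p2 hp2 (fun f => (hsame f).2)
    have hae : ∀ᵐ α ∂mh, ∀ a ∈ D, p1 a α ∈ J₂ α ∧ p2 a α ∈ J₁ α := by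
      rw [ae_ball_iff hDc]
      intro a _
      filter_upwards [htr1 a, htr2 a] with α h1 h2
      exact ⟨h1, h2⟩
    filter_upwards [hae] with α hα
    apply le_antisymm
    · exact GSIAux.le_of_nearest _ _ (hJ2.1 α) D hDd (fun a => p1 a α)
        (fun a _ => ((hp1 a).2 α).1) (fun a _ => ((hp1 a).2 α).2)
        (fun a ha => (hα a ha).1)
    · exact GSIAux.le_of_nearest _ _ (hJ1.1 α) D hDd (fun a => p2 a α)
        (fun a _ => ((hp2 a).2 α).1) (fun a _ => ((hp2 a).2 α).2)
        (fun a ha => (hα a ha).2)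
  · -- (3) surjectivity of the correspondence
    intro J hJm
    exact ⟨GSIAux.memSub Z J, GSIAux.memSub_isClosed Z J hJm.1, hmemSub_inv J,
      fun f => Iff.rfl⟩
  · -- (4) the range function of a generated space
    intro A hAc hVeq
    obtain ⟨J, hJm, hJch, hJeq⟩ := core A hAc
    refine ⟨J, hJm, fun f => ?_, Eventually.of_forall hJeq⟩
    rw [hVeq]
    exact hJch f
end

section
/- Let M ⊆ L²(Ω, H) be a finitely generated multiplicatively invariant space with respect to a determining set D, with associated measurable range function J. Then the length of M, ℓ(M) := min{n : M is generated by n functions}, equals ess sup_{ω∈Ω} dim(J(ω)). -/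
open MeasureTheory

open MeasureTheory Finset Submodule Module ComplexConjugate InnerProductSpace

noncomputable section GSAux

variable {E : Type*} [NormedAddCommGroup E] [InnerProductSpace ℂ E]

open Classical in
/-- Number of indices `j < i` with nonzero Gram–Schmidt vector. -/
def gsCount (F : ℕ → E) (i : ℕ) : ℕ :=
  ((Finset.range i).filter fun j => gramSchmidt ℂ F j ≠ 0).card

open Classical in
/-- The `j`-th nonzero Gram–Schmidt vector among the first `m` (or `0`). -/
def gsSelect (m : ℕ) (F : ℕ → E) (j : ℕ) : E :=
  ∑ i ∈ Finset.range m,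
    if gramSchmidt ℂ F i ≠ 0 ∧ gsCount F i = j then gramSchmidt ℂ F i else 0

local notation "⟪" x ", " y "⟫" => @inner ℂ _ _ x y

lemma gs_inner_self (F : ℕ → E) (i : ℕ) :
    ⟪gramSchmidt ℂ F i, F i⟫ = ⟪gramSchmidt ℂ F i, gramSchmidt ℂ F i⟫ := by
  conv_lhs => rw [gramSchmidt_def'' ℂ F i]
  have hz : ∀ j ∈ Finset.Iio i, ⟪gramSchmidt ℂ F i, gramSchmidt ℂ F j⟫ = 0 := fun j hj =>
    gramSchmidt_orthogonal ℂ F (Finset.mem_Iio.1 hj).ne'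
  rw [inner_add_right, inner_sum]
  simp only [inner_smul_right]
  rw [Finset.sum_eq_zero fun j hj => by rw [hz j hj, mul_zero], add_zero]

lemma norm_gramSchmidt_le (F : ℕ → E) (i : ℕ) : ‖gramSchmidt ℂ F i‖ ≤ ‖F i‖ := by
  rcases eq_or_ne (gramSchmidt ℂ F i) 0 with h | h
  · rw [h, norm_zero]; exact norm_nonneg _
  · have h1 : ‖gramSchmidt ℂ F i‖ * ‖gramSchmidt ℂ F i‖ ≤
        ‖gramSchmidt ℂ F i‖ * ‖F i‖ := by
      calc ‖gramSchmidt ℂ F i‖ * ‖gramSchmidt ℂ F i‖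
          = RCLike.re ⟪gramSchmidt ℂ F i, gramSchmidt ℂ F i⟫ := by
            rw [inner_self_eq_norm_mul_norm]
        _ = RCLike.re ⟪gramSchmidt ℂ F i, F i⟫ := by rw [gs_inner_self]
        _ ≤ ‖⟪gramSchmidt ℂ F i, F i⟫‖ := RCLike.re_le_norm _
        _ ≤ ‖gramSchmidt ℂ F i‖ * ‖F i‖ := norm_inner_le_norm _ _
    exact le_of_mul_le_mul_left h1 (norm_pos_iff.2 h)

lemma norm_gsSelect_le (m : ℕ) (F : ℕ → E) (j : ℕ) :
    ‖gsSelect m F j‖ ≤ ∑ i ∈ Finset.range m, ‖F i‖ := by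
  classical
  refine (norm_sum_le _ _).trans (Finset.sum_le_sum fun i _ => ?_)
  split_ifs with h
  · exact norm_gramSchmidt_le F i
  · rw [norm_zero]; exact norm_nonneg _

lemma gsSelect_mem (m : ℕ) (F : ℕ → E) (j : ℕ) :
    gsSelect m F j ∈ span ℂ (F '' Set.Iio m) := by
  classical
  rw [← span_gramSchmidt_Iio ℂ F m]
  refine Submodule.sum_mem _ fun i hi => ?_
  split_ifs with h
  · exact subset_span ⟨i, Finset.mem_range.1 hi, rfl⟩
  · exact Submodule.zero_mem _

end GSAux
section GS2
variable {E : Type*} [NormedAddCommGroup E] [InnerProductSpace ℂ E]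

open Classical in
lemma gsCount_lt_gsCount {F : ℕ → E} {i i' : ℕ} (hne : gramSchmidt ℂ F i ≠ 0)
    (hii' : i < i') : gsCount F i < gsCount F i' := by
  have hsub : insert i ((Finset.range i).filter fun j => gramSchmidt ℂ F j ≠ 0) ⊆
      (Finset.range i').filter fun j => gramSchmidt ℂ F j ≠ 0 := by
    intro j hj
    rcases Finset.mem_insert.1 hj with rfl | hj
    · exact Finset.mem_filter.2 ⟨Finset.mem_range.2 hii', hne⟩
    · rcases Finset.mem_filter.1 hj with ⟨hj1, hj2⟩
      exact Finset.mem_filter.2 ⟨Finset.mem_range.2 ((Finset.mem_range.1 hj1).trans hii'), hj2⟩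
  have hni : i ∉ (Finset.range i).filter fun j => gramSchmidt ℂ F j ≠ 0 := by
    simp [Finset.mem_filter]
  have := Finset.card_le_card hsub
  rwa [Finset.card_insert_of_notMem hni, Nat.add_one_le_iff] at this

open Classical in
lemma gsCount_lt_of_mem {F : ℕ → E} {m kn i : ℕ} (him : i < m)
    (hne : gramSchmidt ℂ F i ≠ 0)
    (hdim : finrank ℂ (span ℂ (F '' Set.Iio m)) ≤ kn) : gsCount F i < kn := by
  classical
  set T := (Finset.range m).filter fun j => gramSchmidt ℂ F j ≠ 0 with hT
  -- linear independence of nonzero GS vectors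
  have hli : LinearIndependent ℂ (fun x : {x // x ∈ T} => gramSchmidt ℂ F (x : ℕ)) := by
    refine linearIndependent_of_ne_zero_of_inner_eq_zero ?_ ?_
    · exact fun x => (Finset.mem_filter.1 x.2).2
    · intro x y hxy
      exact gramSchmidt_orthogonal ℂ F (fun h => hxy (Subtype.ext h))
  have hfin : FiniteDimensional ℂ (span ℂ (F '' Set.Iio m)) :=
    FiniteDimensional.span_of_finite ℂ ((Set.finite_Iio m).image F)
  have hTcard : T.card ≤ kn := by
    have h1 : finrank ℂ (span ℂ (Set.range fun x : {x // x ∈ T} =>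
        gramSchmidt ℂ F (x : ℕ))) = T.card := by
      rw [finrank_span_eq_card hli, Fintype.card_coe]
    have h2 : span ℂ (Set.range fun x : {x // x ∈ T} => gramSchmidt ℂ F (x : ℕ)) ≤
        span ℂ (F '' Set.Iio m) := by
      rw [← span_gramSchmidt_Iio ℂ F m, Submodule.span_le]
      rintro w ⟨x, rfl⟩
      exact subset_span ⟨(x : ℕ), Finset.mem_range.1 (Finset.mem_filter.1 x.2).1, rfl⟩
    calc T.card = _ := h1.symm
      _ ≤ finrank ℂ (span ℂ (F '' Set.Iio m)) := Submodule.finrank_mono h2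
      _ ≤ kn := hdim
  have hsub : insert i ((Finset.range i).filter fun j => gramSchmidt ℂ F j ≠ 0) ⊆ T := by
    intro j hj
    rcases Finset.mem_insert.1 hj with rfl | hj
    · exact Finset.mem_filter.2 ⟨Finset.mem_range.2 him, hne⟩
    · rcases Finset.mem_filter.1 hj with ⟨hj1, hj2⟩
      exact Finset.mem_filter.2 ⟨Finset.mem_range.2 ((Finset.mem_range.1 hj1).trans him), hj2⟩
  have hni : i ∉ (Finset.range i).filter fun j => gramSchmidt ℂ F j ≠ 0 := by
    simp [Finset.mem_filter]
  have := (Finset.card_le_card hsub)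
  rw [Finset.card_insert_of_notMem hni] at this
  calc gsCount F i < gsCount F i + 1 := Nat.lt_succ_self _
    _ ≤ T.card := this
    _ ≤ kn := hTcard

open Classical in
lemma gsSelect_eq_of_mem {F : ℕ → E} {m i : ℕ} (him : i < m)
    (hne : gramSchmidt ℂ F i ≠ 0) : gsSelect m F (gsCount F i) = gramSchmidt ℂ F i := by
  classical
  rw [gsSelect]
  rw [Finset.sum_eq_single_of_mem i (Finset.mem_range.2 him)]
  · rw [if_pos ⟨hne, rfl⟩]
  · intro i' _ hne'
    rw [if_neg]
    rintro ⟨h1, h2⟩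
    rcases lt_or_gt_of_ne hne' with h | h
    · exact absurd h2 (gsCount_lt_gsCount h1 h).ne
    · exact absurd h2.symm (gsCount_lt_gsCount hne h).ne

lemma gsSelect_span {m kn : ℕ} {F : ℕ → E}
    (hdim : finrank ℂ (span ℂ (F '' Set.Iio m)) ≤ kn) :
    span ℂ {w | ∃ j : Fin kn, w = gsSelect m F (j : ℕ)} = span ℂ (F '' Set.Iio m) := by
  classical
  refine le_antisymm (Submodule.span_le.2 ?_) ?_
  · rintro w ⟨j, rfl⟩
    exact gsSelect_mem m F _
  · rw [← span_gramSchmidt_Iio ℂ F m, Submodule.span_le]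
    rintro w ⟨i, him, rfl⟩
    rcases eq_or_ne (gramSchmidt ℂ F i) 0 with h | h
    · rw [h]; exact Submodule.zero_mem _
    · refine subset_span ⟨⟨gsCount F i, gsCount_lt_of_mem him h hdim⟩, ?_⟩
      exact (gsSelect_eq_of_mem him h).symm
end GS2
section Meas
variable {Ω : Type*} [MeasurableSpace Ω] {E : Type*} [NormedAddCommGroup E]
  [InnerProductSpace ℂ E] [SecondCountableTopology E]

lemma stronglyMeasurable_gramSchmidt {f : ℕ → Ω → E}
    (hf : ∀ i, StronglyMeasurable (f i)) :
    ∀ i, StronglyMeasurable (fun ω => gramSchmidt ℂ (fun n => f n ω) i) := by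
  intro i
  induction i using Nat.strong_induction_on with
  | _ i ih =>
    have heq : (fun ω => gramSchmidt ℂ (fun n => f n ω) i) = fun ω => f i ω -
        ∑ j ∈ Finset.Iio i,
          ((inner ℂ (gramSchmidt ℂ (fun n => f n ω) j) (f i ω) /
            ((‖gramSchmidt ℂ (fun n => f n ω) j‖ : ℂ)) ^ 2 : ℂ) •
            gramSchmidt ℂ (fun n => f n ω) j) := by
      funext ω
      exact eq_sub_of_add_eq (gramSchmidt_def'' ℂ (fun n => f n ω) i).symm
    rw [heq]
    refine (hf i).sub (Finset.stronglyMeasurable_fun_sum _ fun j hj => ?_)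
    have hj' := ih j (Finset.mem_Iio.1 hj)
    have hsc : StronglyMeasurable (fun ω =>
        (inner ℂ (gramSchmidt ℂ (fun n => f n ω) j) (f i ω) /
          ((‖gramSchmidt ℂ (fun n => f n ω) j‖ : ℂ)) ^ 2 : ℂ)) := by
      have h1 : StronglyMeasurable (fun ω =>
          (inner ℂ (gramSchmidt ℂ (fun n => f n ω) j) (f i ω) : ℂ)) := hj'.inner (hf i)
      have h2 : StronglyMeasurable (fun ω =>
          ((‖gramSchmidt ℂ (fun n => f n ω) j‖ : ℂ)) ^ 2) :=
        ((Complex.continuous_ofReal.comp_stronglyMeasurable hj'.norm).pow 2)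
      exact (h1.measurable.div h2.measurable).stronglyMeasurable
    exact hsc.smul hj'
end Meas
section Meas2
variable {Ω : Type*} [MeasurableSpace Ω] {E : Type*} [NormedAddCommGroup E]
  [InnerProductSpace ℂ E] [SecondCountableTopology E] [MeasurableSpace E] [BorelSpace E]

open Classical in
lemma measurableSet_gs_ne {f : ℕ → Ω → E} (hf : ∀ i, StronglyMeasurable (f i)) (i : ℕ) :
    MeasurableSet {ω | gramSchmidt ℂ (fun n => f n ω) i ≠ 0} := by
  have := (stronglyMeasurable_gramSchmidt hf i).measurable
  exact (this (measurableSet_singleton 0)).compl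

open Classical in
lemma measurable_gsCount {f : ℕ → Ω → E} (hf : ∀ i, StronglyMeasurable (f i)) (i : ℕ) :
    Measurable (fun ω => gsCount (fun n => f n ω) i) := by
  have heq : (fun ω => gsCount (fun n => f n ω) i) = fun ω =>
      ∑ j ∈ Finset.range i,
        ({ω | gramSchmidt ℂ (fun n => f n ω) j ≠ 0}.indicator (fun _ => 1) ω) := by
    funext ω
    rw [gsCount, Finset.card_filter]
    refine Finset.sum_congr rfl fun j _ => ?_
    simp only [Set.indicator_apply, Set.mem_setOf_eq]
  rw [heq]
  exact Finset.measurable_fun_sum _ fun j _ =>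
    measurable_const.indicator (measurableSet_gs_ne hf j)

open Classical in
lemma stronglyMeasurable_gsSelect {f : ℕ → Ω → E}
    (hf : ∀ i, StronglyMeasurable (f i)) (m j : ℕ) :
    StronglyMeasurable (fun ω => gsSelect m (fun n => f n ω) j) := by
  have heq : (fun ω => gsSelect m (fun n => f n ω) j) = fun ω =>
      ∑ i ∈ Finset.range m,
        ({ω' | gramSchmidt ℂ (fun n => f n ω') i ≠ 0 ∧
            gsCount (fun n => f n ω') i = j}.indicator
          (fun ω' => gramSchmidt ℂ (fun n => f n ω') i) ω) := by
    funext ω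
    rw [gsSelect]
    refine Finset.sum_congr rfl fun i _ => ?_
    simp only [Set.indicator_apply, Set.mem_setOf_eq]
  rw [heq]
  refine Finset.stronglyMeasurable_fun_sum _ fun i _ => ?_
  refine (stronglyMeasurable_gramSchmidt hf i).indicator ?_
  have h1 := measurableSet_gs_ne hf i
  have h2 : MeasurableSet {ω | gsCount (fun n => f n ω) i = j} :=
    measurable_gsCount hf i (measurableSet_singleton j)
  exact h1.inter h2
end Meas2
lemma ae_le_essSup_enat {Ω : Type*} [MeasurableSpace Ω] {ν : MeasureTheory.Measure Ω}
    {f : Ω → ℕ∞} {c : ℕ∞} (hc : ∀ᵐ ω ∂ν, f ω ≤ c) :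
    ∀ᵐ ω ∂ν, f ω ≤ essSup f ν := by
  set A : Set ℕ∞ := {a | ν {x | a < f x} = 0} with hA
  have hcA : c ∈ A := by
    have := hc
    rw [MeasureTheory.ae_iff] at this
    simpa [hA, not_le] using this
  have hne : A.Nonempty := ⟨c, hcA⟩
  have hwf : WellFounded ((· < ·) : ℕ∞ → ℕ∞ → Prop) := wellFounded_lt
  have hmem : sInf A ∈ A := by
    have h1 : hwf.min A hne ∈ A := hwf.min_mem A hne
    have h2 : sInf A = hwf.min A hne :=
      le_antisymm (sInf_le h1) (le_sInf fun b hb => not_lt.1 (hwf.not_lt_min A hb))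
    rw [h2]; exact h1
  have hgoal : ∀ᵐ ω ∂ν, f ω ≤ sInf A := by
    rw [MeasureTheory.ae_iff]
    have hset : {a | ¬ f a ≤ sInf A} = {x | sInf A < f x} :=
      Set.ext fun x => by rw [Set.mem_setOf_eq, Set.mem_setOf_eq, not_le]
    rw [hset]
    exact hmem
  rw [essSup_eq_sInf, ← hA]
  exact hgoal

/-- `M` is the MI space `M_D(A)` generated by `A`: the smallest closed multiplicatively
invariant subspace containing `A`. -/
def GeneratesMI {Ω E : Type*} [MeasurableSpace Ω] [NormedAddCommGroup E]
    [InnerProductSpace ℂ E] (ν : Measure Ω) (D : Set (Ω → ℂ))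
    (M : Submodule ℂ (Lp E 2 ν)) (A : Set (Lp E 2 ν)) : Prop :=
  A ⊆ (M : Set (Lp E 2 ν)) ∧ IsClosed (M : Set (Lp E 2 ν)) ∧
    IsMISpace ν D (M : Set (Lp E 2 ν)) ∧
    ∀ N : Submodule ℂ (Lp E 2 ν), IsClosed (N : Set (Lp E 2 ν)) →
      IsMISpace ν D (N : Set (Lp E 2 ν)) → A ⊆ (N : Set (Lp E 2 ν)) → M ≤ N

/-- The length (minimal number of generators) of a finitely generated MI space equals the
essential supremum of the dimensions of its range function. -/
theorem length_eq_essSup_dim_range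
    {Ω : Type*} [MeasurableSpace Ω] (ν : Measure Ω) [SigmaFinite ν]
    {E : Type*} [NormedAddCommGroup E] [InnerProductSpace ℂ E] [CompleteSpace E]
    [SecondCountableTopology E]
    [TopologicalSpace.SeparableSpace (Lp ℂ 2 ν)]
    (D : Set (Ω → ℂ))
    (hDbdd : ∀ g ∈ D, MemLp g ⊤ ν)
    (hDdet : ∀ f : Ω → ℂ, Integrable f ν →
      (∀ g ∈ D, ∫ ω, f ω * g ω ∂ν = 0) → f =ᵐ[ν] 0)
    (M : Submodule ℂ (Lp E 2 ν))
    (hMfin : ∃ n : ℕ, ∃ Φ : Fin n → Lp E 2 ν, GeneratesMI ν D M (Set.range Φ))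
    (J : Ω → Submodule ℂ E) (hJ : IsMeasurableRangeFunction J)
    -- J is the range function associated to M
    (hJM : ∀ Φ : Lp E 2 ν, Φ ∈ M ↔ ∀ᵐ ω ∂ν, Φ ω ∈ J ω)
    (hJgen : ∀ (n : ℕ) (Φ : Fin n → Lp E 2 ν), GeneratesMI ν D M (Set.range Φ) →
      ∀ᵐ ω ∂ν, J ω = (Submodule.span ℂ {v | ∃ i, v = Φ i ω}).topologicalClosure) :
    (↑(sInf {n : ℕ | ∃ Φ : Fin n → Lp E 2 ν, GeneratesMI ν D M (Set.range Φ)}) : ℕ∞) =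
      essSup (fun ω => (Module.finrank ℂ (J ω) : ℕ∞)) ν := by

  classical
  set S : Set ℕ := {n : ℕ | ∃ Φ : Fin n → Lp E 2 ν, GeneratesMI ν D M (Set.range Φ)} with hS
  have hSne : S.Nonempty := hMfin
  set m : ℕ := sInf S with hm
  obtain ⟨Φ, hΦgen⟩ : ∃ Φ : Fin m → Lp E 2 ν, GeneratesMI ν D M (Set.range Φ) :=
    Nat.sInf_mem hSne
  letI : MeasurableSpace E := borel E
  haveI : BorelSpace E := ⟨rfl⟩
  -- strongly measurable representatives
  set f : ℕ → Ω → E := fun n ω =>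
    if h : n < m then (Lp.aestronglyMeasurable (Φ ⟨n, h⟩)).mk _ ω else 0 with hfdef
  have hfSM : ∀ n, StronglyMeasurable (f n) := by
    intro n
    by_cases h : n < m
    · simpa [hfdef, h] using (Lp.aestronglyMeasurable (Φ ⟨n, h⟩)).stronglyMeasurable_mk
    · simpa [hfdef, h] using stronglyMeasurable_const (b := (0 : E))
  have hfe : ∀ i : Fin m, (⇑(Φ i) : Ω → E) =ᵐ[ν] f i := by
    intro i
    have := (Lp.aestronglyMeasurable (Φ i)).ae_eq_mk
    refine this.trans (Filter.Eventually.of_forall fun ω => ?_)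
    simp [hfdef, i.isLt]
  have haeΦf : ∀ᵐ ω ∂ν, ∀ i : Fin m, Φ i ω = f i ω := ae_all_iff.2 fun i => hfe i
  -- the range function is the span of the representatives a.e.
  have hJae : ∀ᵐ ω ∂ν, J ω = Submodule.span ℂ ((fun n => f n ω) '' Set.Iio m) := by
    filter_upwards [hJgen m Φ hΦgen, haeΦf] with ω h1 h2
    have hseteq : {v | ∃ i : Fin m, v = Φ i ω} = (fun n => f n ω) '' Set.Iio (m : ℕ) := by
      ext w
      constructor
      · rintro ⟨i, rfl⟩
        exact ⟨i, i.isLt, (h2 i).symm⟩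
      · rintro ⟨n, hn, rfl⟩
        exact ⟨⟨n, hn⟩, (h2 ⟨n, hn⟩).symm⟩
    rw [h1, hseteq]
    haveI : FiniteDimensional ℂ
        (Submodule.span ℂ ((fun n => f n ω) '' Set.Iio (m : ℕ))) :=
      FiniteDimensional.span_of_finite ℂ ((Set.finite_Iio (m : ℕ)).image _)
    exact IsClosed.submodule_topologicalClosure_eq
      (Submodule.closed_of_finiteDimensional _)
  have hdim_m : ∀ᵐ ω ∂ν, (Module.finrank ℂ (J ω) : ℕ∞) ≤ (m : ℕ∞) := by
    filter_upwards [hJae] with ω hω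
    rw [hω]
    have himg : (fun n => f n ω) '' Set.Iio (m : ℕ) =
        Set.range (fun i : Fin m => f i ω) := by
      ext w
      constructor
      · rintro ⟨n, hn, rfl⟩; exact ⟨⟨n, hn⟩, rfl⟩
      · rintro ⟨i, rfl⟩; exact ⟨i, i.isLt, rfl⟩
    have hle : Module.finrank ℂ
        (Submodule.span ℂ ((fun n => f n ω) '' Set.Iio (m : ℕ))) ≤ m := by
      rw [himg]
      simpa [Set.finrank] using finrank_range_le_card (fun i : Fin m => f i ω)
    exact_mod_cast hle
  set k : ℕ∞ := essSup (fun ω => (Module.finrank ℂ (J ω) : ℕ∞)) ν with hk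
  have hessle : k ≤ (m : ℕ∞) := essSup_le_of_ae_le _ hdim_m
  have hktop : k ≠ ⊤ := (hessle.trans_lt (ENat.coe_lt_top m)).ne
  set kn : ℕ := k.toNat with hkn
  have hkkn : (kn : ℕ∞) = k := ENat.coe_toNat hktop
  have hdim_kn : ∀ᵐ ω ∂ν, Module.finrank ℂ (J ω) ≤ kn := by
    filter_upwards [ae_le_essSup_enat hdim_m] with ω hω
    rw [← hk, ← hkkn] at hω
    exact_mod_cast hω
  -- the selected generators
  set Ψraw : ℕ → Ω → E := fun j ω => gsSelect m (fun n => f n ω) j with hΨraw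
  have hΨSM : ∀ j, StronglyMeasurable (Ψraw j) := fun j =>
    stronglyMeasurable_gsSelect hfSM m j
  have hfmem : ∀ n, MemLp (f n) 2 ν := by
    intro n
    by_cases h : n < m
    · refine MemLp.ae_eq ?_ (Lp.memLp (Φ ⟨n, h⟩))
      refine ((Lp.aestronglyMeasurable (Φ ⟨n, h⟩)).ae_eq_mk).mono fun ω hω => ?_
      rw [hω]; simp [hfdef, h]
    · have : f n = fun _ => 0 := by funext ω; simp [hfdef, h]
      rw [this]
      exact MemLp.zero
  have hBmem : MemLp (fun ω => ∑ i ∈ Finset.range m, ‖f i ω‖) 2 ν := by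
    have h' := memLp_finsetSum' (Finset.range m) (fun i _ => (hfmem i).norm)
    have heq : (∑ i ∈ Finset.range m, fun ω => ‖f i ω‖) =
        fun ω => ∑ i ∈ Finset.range m, ‖f i ω‖ := by
      funext ω; simp
    rwa [heq] at h' 
  have hΨmem : ∀ j, MemLp (Ψraw j) 2 ν := by
    intro j
    refine MemLp.of_le hBmem (hΨSM j).aestronglyMeasurable
      (Filter.Eventually.of_forall fun ω => ?_)
    have h1 : ‖Ψraw j ω‖ ≤ ∑ i ∈ Finset.range m, ‖f i ω‖ := norm_gsSelect_le _ _ _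
    exact h1.trans (le_abs_self _)
  set Ψ : Fin kn → Lp E 2 ν := fun j => ((hΨmem j).toLp _) with hΨ
  have hΨcoe : ∀ j : Fin kn, (⇑(Ψ j) : Ω → E) =ᵐ[ν] Ψraw j := fun j =>
    MemLp.coeFn_toLp _
  have haeJΨ : ∀ᵐ ω ∂ν,
      J ω = Submodule.span ℂ {w | ∃ j : Fin kn, w = Ψraw (j : ℕ) ω} := by
    filter_upwards [hJae, hdim_kn] with ω h1 h2
    rw [h1] at h2 ⊢
    exact (gsSelect_span h2).symm
  have hΨM : ∀ j, Ψ j ∈ M := by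
    intro j
    refine (hJM (Ψ j)).2 ?_
    filter_upwards [hΨcoe j, haeJΨ] with ω h1 h2
    rw [h1, h2]
    exact Submodule.subset_span ⟨j, rfl⟩
  -- the MI space generated by Ψ
  set 𝒩 : Set (Submodule ℂ (Lp E 2 ν)) := {N | IsClosed (N : Set (Lp E 2 ν)) ∧
    IsMISpace ν D (N : Set (Lp E 2 ν)) ∧ Set.range Ψ ⊆ (N : Set (Lp E 2 ν))} with h𝒩
  set N₀ : Submodule ℂ (Lp E 2 ν) := sInf 𝒩 with hN₀
  have hN₀closed : IsClosed (N₀ : Set (Lp E 2 ν)) := by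
    rw [hN₀, Submodule.coe_sInf]
    exact isClosed_biInter fun N hN => hN.1
  have hN₀MI : IsMISpace ν D (N₀ : Set (Lp E 2 ν)) := by
    intro Φ' hΦ' g hg Ψ' hΨ'
    have hΦ'' : Φ' ∈ N₀ := hΦ'
    rw [hN₀, Submodule.mem_sInf] at hΦ''
    exact Submodule.mem_sInf.2 fun N hN => hN.2.1 Φ' (hΦ'' N hN) g hg Ψ' hΨ'
  have hN₀range : Set.range Ψ ⊆ (N₀ : Set (Lp E 2 ν)) := fun x hx =>
    Submodule.mem_sInf.2 fun N hN => hN.2.2 hx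
  have hN₀M : N₀ ≤ M := sInf_le ⟨hΦgen.2.1, hΦgen.2.2.1, fun x hx => by
    rcases hx with ⟨j, rfl⟩; exact hΨM j⟩
  haveI : CompleteSpace N₀ := hN₀closed.completeSpace_coe
  -- every original generator belongs to N₀
  have hrange : Set.range Φ ⊆ (N₀ : Set (Lp E 2 ν)) := by
    rintro x ⟨i, rfl⟩
    set r : Lp E 2 ν := Φ i - (orthogonalProjection N₀ (Φ i) : Lp E 2 ν) with hr
    have hrorth : r ∈ N₀ᗮ := Submodule.sub_starProjection_mem_orthogonal (K := N₀) (Φ i)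
    have hrM : r ∈ M := M.sub_mem (hΦgen.1 ⟨i, rfl⟩)
      (hN₀M (SetLike.coe_mem (orthogonalProjection N₀ (Φ i))))
    have hrJ : ∀ᵐ ω ∂ν, r ω ∈ J ω := (hJM r).1 hrM
    have hinner : ∀ j : Fin kn,
        (fun ω => (inner ℂ (r ω) ((Ψ j) ω) : ℂ)) =ᵐ[ν] 0 := by
      intro j
      refine hDdet _ (L2.integrable_inner (𝕜 := ℂ) r (Ψ j)) ?_
      intro g hg
      have hGmem : MemLp (g • (⇑(Ψ j) : Ω → E)) 2 ν :=
        (Lp.memLp (Ψ j)).smul (p := ⊤) (hDbdd g hg)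
      set G : Lp E 2 ν := hGmem.toLp _ with hG
      have hGN₀ : G ∈ N₀ := by
        refine hN₀MI (Ψ j) (hN₀range ⟨j, rfl⟩) g hg G ?_
        filter_upwards [hGmem.coeFn_toLp] with ω h
        rw [h]; rfl
      have h0 : (inner ℂ G r : ℂ) = 0 :=
        (Submodule.mem_orthogonal N₀ r).1 hrorth G hGN₀
      have h1 : (∫ ω, (inner ℂ (G ω) (r ω) : ℂ) ∂ν) = 0 := by
        rw [← L2.inner_def]; exact h0
      have h2 : (fun ω => (inner ℂ (G ω) (r ω) : ℂ)) =ᵐ[ν]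
          fun ω => conj (g ω) * (inner ℂ ((Ψ j) ω) (r ω) : ℂ) := by
        filter_upwards [hGmem.coeFn_toLp] with ω h
        rw [h]
        exact inner_smul_left _ _ _
      have h3 : (∫ ω, conj (g ω) * (inner ℂ ((Ψ j) ω) (r ω) : ℂ) ∂ν) = 0 := by
        rw [← integral_congr_ae h2]; exact h1
      have h4 : (∫ ω, conj (conj (g ω) * (inner ℂ ((Ψ j) ω) (r ω) : ℂ)) ∂ν) = 0 := by
        rw [integral_conj, h3, map_zero]
      have h5 : (fun ω => conj (conj (g ω) * (inner ℂ ((Ψ j) ω) (r ω) : ℂ))) =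
          fun ω => (inner ℂ (r ω) ((Ψ j) ω) : ℂ) * g ω := by
        funext ω
        rw [map_mul, Complex.conj_conj, inner_conj_symm, mul_comm]
      rw [h5] at h4
      exact h4
    have haeinner : ∀ᵐ ω ∂ν, ∀ j : Fin kn, (inner ℂ (r ω) ((Ψ j) ω) : ℂ) = 0 :=
      ae_all_iff.2 fun j => hinner j
    have haeΨcoe : ∀ᵐ ω ∂ν, ∀ j : Fin kn, (Ψ j) ω = Ψraw j ω :=
      ae_all_iff.2 fun j => hΨcoe j
    have hrzero : r = 0 := by
      have hae0 : ∀ᵐ ω ∂ν, r ω = (0 : Lp E 2 ν) ω := by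
        filter_upwards [hrJ, haeJΨ, haeinner, haeΨcoe, Lp.coeFn_zero (E := E) (p := 2) (μ := ν)]
          with ω h1 h2 h3 h4 h5
        have hW : {w | ∃ j : Fin kn, w = Ψraw (j : ℕ) ω} =
            Set.range fun j : Fin kn => Ψraw (j : ℕ) ω := by
          ext w; exact ⟨fun ⟨j, h⟩ => ⟨j, h.symm⟩, fun ⟨j, h⟩ => ⟨j, h.symm⟩⟩
        rw [h2, hW] at h1
        have hperp : ∀ u ∈ Submodule.span ℂ
            (Set.range fun j : Fin kn => Ψraw (j : ℕ) ω), (inner ℂ (r ω) u : ℂ) = 0 := by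
          intro u hu
          induction hu using Submodule.span_induction with
          | mem x hx =>
            rcases hx with ⟨j, rfl⟩
            show (inner ℂ (r ω) (Ψraw (j : ℕ) ω) : ℂ) = 0
            rw [← h4 j]
            exact h3 j
          | zero => exact inner_zero_right _
          | add x y _ _ hx hy => rw [inner_add_right, hx, hy, add_zero]
          | smul c x _ hx => rw [inner_smul_right, hx, mul_zero]
        have hzero : (inner ℂ (r ω) (r ω) : ℂ) = 0 := hperp _ h1
        rw [h5]
        exact inner_self_eq_zero.1 hzero
      exact Lp.ext hae0
    have heq : Φ i = (orthogonalProjection N₀ (Φ i) : Lp E 2 ν) := by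
      have := sub_eq_zero.1 hrzero
      exact this
    rw [heq]
    exact SetLike.coe_mem _
  have hMN₀ : M ≤ N₀ := hΦgen.2.2.2 N₀ hN₀closed hN₀MI hrange
  have hknS : kn ∈ S := by
    refine ⟨Ψ, ?_, hΦgen.2.1, hΦgen.2.2.1, ?_⟩
    · rintro x ⟨j, rfl⟩; exact hΨM j
    · intro N hNc hNMI hNr
      exact hMN₀.trans (sInf_le ⟨hNc, hNMI, hNr⟩)
  have hfinal1 : (m : ℕ∞) ≤ k := by
    rw [← hkkn]
    exact_mod_cast Nat.sInf_le hknS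
  exact le_antisymm hfinal1 hessle
end

section
/- Let G be a second countable LCA group and V ⊆ L²(G) a closed subspace. Then V is invariant under all translations T_γ, γ ∈ G, if and only if there exists a measurable set E ⊆ Ĝ such that V = {f ∈ L²(G) : supp(f̂) ⊆ E}. -/
open MeasureTheory ComplexConjugate

set_option maxHeartbeats 2000000
set_option synthInstance.maxHeartbeats 400000

/-- Wiener's characterization: a closed subspace `V ⊆ L²(G)` of a second countable LCA
group `G` is invariant under all translations iff `V = {f : supp f̂ ⊆ E}` for some
measurable `E ⊆ Ĝ`.  The dual group and the Fourier–Plancherel transform are abstracted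
as a measure space `Gh` with a separating family of unimodular characters `e x = (x, ·)`
and an isometric isomorphism `F` turning translation by `y` into multiplication by
`(−y, ·) = conj (e y ·)`. -/
theorem translation_invariant_iff_support
    {G : Type*} [AddCommGroup G] [TopologicalSpace G] [IsTopologicalAddGroup G]
    [LocallyCompactSpace G] [SecondCountableTopology G] [MeasurableSpace G] [BorelSpace G]
    (mG : Measure G) [mG.IsAddHaarMeasure]
    {Gh : Type*} [MeasurableSpace Gh] (mGh : Measure Gh) [SigmaFinite mGh]
    (e : G → Gh → ℂ)
    (hemeas : ∀ x, Measurable (e x))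
    (headd : ∀ x y ξ, e (x + y) ξ = e x ξ * e y ξ)
    (henorm : ∀ x ξ, ‖e x ξ‖ = 1)
    -- the characters form a determining family (uniqueness of Fourier coefficients)
    (hedet : ∀ h : Gh → ℂ, Integrable h mGh →
      (∀ x : G, ∫ ξ, h ξ * e x ξ ∂mGh = 0) → h =ᵐ[mGh] 0)
    -- the Fourier–Plancherel transform
    (F : Lp ℂ 2 mG ≃ₗᵢ[ℂ] Lp ℂ 2 mGh)
    (hFtrans : ∀ y : G, ∀ f g : Lp ℂ 2 mG, (⇑g =ᵐ[mG] fun x => f (x - y)) →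
      ⇑(F g) =ᵐ[mGh] fun ξ => conj (e y ξ) * (F f) ξ)
    (V : Submodule ℂ (Lp ℂ 2 mG)) (hV : IsClosed (V : Set (Lp ℂ 2 mG))) :
    (∀ y : G, ∀ f ∈ V, ∀ g : Lp ℂ 2 mG,
        (⇑g =ᵐ[mG] fun x => f (x - y)) → g ∈ V) ↔
      ∃ E : Set Gh, MeasurableSet E ∧
        ∀ f : Lp ℂ 2 mG, f ∈ V ↔ ∀ᵐ ξ ∂mGh, ξ ∉ E → (F f) ξ = 0 := by
  -- basic facts about the characters
  have hene : ∀ y ξ, e y ξ ≠ 0 := by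
    intro y ξ h0
    have := henorm y ξ
    rw [h0, norm_zero] at this
    norm_num at this
  have he0 : ∀ ξ, e 0 ξ = 1 := by
    intro ξ
    have h := headd 0 0 ξ
    rw [add_zero] at h
    have : e 0 ξ * 1 = e 0 ξ * e 0 ξ := by rw [mul_one]; exact h
    exact (mul_left_cancel₀ (hene 0 ξ) this).symm
  have heconj : ∀ y ξ, conj (e y ξ) = e (-y) ξ := by
    intro y ξ
    have h1 : e y ξ * e (-y) ξ = 1 := by
      rw [← headd]; simp [he0]
    have h2 : conj (e y ξ) * e y ξ = 1 := by
      have hns : Complex.normSq (e y ξ) = 1 := by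
        rw [Complex.normSq_eq_norm_sq, henorm]; norm_num
      calc conj (e y ξ) * e y ξ = (Complex.normSq (e y ξ) : ℂ) := by
            rw [mul_comm, Complex.mul_conj]
        _ = 1 := by rw [hns]; norm_num
    calc conj (e y ξ) = conj (e y ξ) * (e y ξ * e (-y) ξ) := by rw [h1, mul_one]
      _ = (conj (e y ξ) * e y ξ) * e (-y) ξ := by ring
      _ = e (-y) ξ := by rw [h2, one_mul]
  -- multiplication of an L² element by a unimodular character stays in L²
  have hmul : ∀ (y : G) (u : Lp ℂ 2 mGh), MemLp (fun ξ => e y ξ * u ξ) 2 mGh := by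
    intro y u
    refine MemLp.of_le (Lp.memLp u)
      ((hemeas y).aestronglyMeasurable.mul (Lp.aestronglyMeasurable u)) ?_
    refine Filter.Eventually.of_forall fun ξ => ?_
    rw [norm_mul, henorm, one_mul]
  obtain ⟨M, hM⟩ : ∃ M : G → Lp ℂ 2 mGh → Lp ℂ 2 mGh,
      ∀ y u, ⇑(M y u) =ᵐ[mGh] fun ξ => e y ξ * u ξ :=
    ⟨fun y u => (hmul y u).toLp _, fun y u => MemLp.coeFn_toLp _⟩
  -- the image subspace
  set W : Submodule ℂ (Lp ℂ 2 mGh) :=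
    V.map (F.toLinearEquiv : Lp ℂ 2 mG →ₗ[ℂ] Lp ℂ 2 mGh) with hWdef
  have hWmem : ∀ f : Lp ℂ 2 mG, f ∈ V ↔ F f ∈ W := by
    intro f
    constructor
    · intro hf
      exact ⟨f, hf, rfl⟩
    · rintro ⟨g, hg, hfg⟩
      have : g = f := F.injective hfg
      rwa [this] at hg
  have hWclosed : IsClosed (W : Set (Lp ℂ 2 mGh)) := by
    have hset : (W : Set (Lp ℂ 2 mGh)) = F.toHomeomorph '' (V : Set (Lp ℂ 2 mG)) := by
      ext u
      simp only [SetLike.mem_coe, Set.mem_image, hWdef, Submodule.mem_map]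
      exact ⟨fun ⟨g, hg, hgu⟩ => ⟨g, hg, hgu⟩, fun ⟨g, hg, hgu⟩ => ⟨g, hg, hgu⟩⟩
    rw [hset]
    exact F.toHomeomorph.isClosedMap _ hV
  haveI : CompleteSpace W := hWclosed.completeSpace_coe
  haveI : Submodule.HasOrthogonalProjection W := Submodule.HasOrthogonalProjection.ofCompleteSpace W
  -- inner products as integrals
  have hinner : ∀ (a b : Lp ℂ 2 mGh) (a' b' : Gh → ℂ), ⇑a =ᵐ[mGh] a' → ⇑b =ᵐ[mGh] b' →
      (@inner ℂ _ _ a b) = ∫ ξ, conj (a' ξ) * b' ξ ∂mGh := by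
    intro a b a' b' ha hb
    rw [L2.inner_def]
    refine integral_congr_ae ?_
    filter_upwards [ha, hb] with ξ h1 h2
    simp only [RCLike.inner_apply, h1, h2]; ring
  -- the multiplication operators are mutually adjoint
  have hMadj : ∀ (y : G) (u v : Lp ℂ 2 mGh),
      (@inner ℂ _ _ (M y u) v) = @inner ℂ _ _ u (M (-y) v) := by
    intro y u v
    rw [hinner _ _ _ _ (hM y u) Filter.EventuallyEq.rfl,
      hinner _ _ _ _ Filter.EventuallyEq.rfl (hM (-y) v)]
    refine integral_congr_ae (Filter.Eventually.of_forall fun ξ => ?_)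
    simp only [map_mul, ← heconj y ξ]
    ring
  constructor
  · -- forward direction: translation invariance gives the support characterization
    intro hVinv
    -- W is invariant under multiplication by the characters
    have hMW : ∀ (y : G) (u : Lp ℂ 2 mGh), u ∈ W → M y u ∈ W := by
      intro y u hu
      rw [hWdef, Submodule.mem_map] at hu
      obtain ⟨f, hf, hfu⟩ := hu
      have hfu' : F f = u := hfu
      have hmp : MeasurePreserving (fun x : G => x - (-y)) mG mG :=
        measurePreserving_sub_right mG (-y)
      set g : Lp ℂ 2 mG := Lp.compMeasurePreserving (fun x : G => x - (-y)) hmp f with hgdef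
      have hgae : ⇑g =ᵐ[mG] fun x => f (x - (-y)) :=
        Lp.coeFn_compMeasurePreserving f hmp
      have hgV : g ∈ V := hVinv (-y) f hf g hgae
      have hFg : ⇑(F g) =ᵐ[mGh] fun ξ => conj (e (-y) ξ) * (F f) ξ := hFtrans (-y) f g hgae
      rw [hfu'] at hFg
      have hMu : M y u = F g := by
        apply Lp.ext
        have h2 : ⇑(F g) =ᵐ[mGh] fun ξ => e y ξ * u ξ := by
          filter_upwards [hFg] with ξ h1
          rw [h1, heconj, neg_neg]
        exact (hM y u).trans h2.symm
      rw [hMu]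
      exact (hWmem g).1 hgV
    -- the orthogonal projection onto W
    obtain ⟨P, hPval⟩ : ∃ P : Lp ℂ 2 mGh → Lp ℂ 2 mGh,
        ∀ u, P u = W.starProjection u :=
      ⟨_, fun _ => rfl⟩
    have hPmem : ∀ u, P u ∈ W := by
      intro u; rw [hPval]; exact W.starProjection_apply_mem u
    have hPself : ∀ u ∈ W, P u = u := by
      intro u hu; rw [hPval]; exact Submodule.starProjection_eq_self_iff.2 hu
    have hPuiff : ∀ z : Lp ℂ 2 mGh, P z = z ↔ z ∈ W := by
      intro z; rw [hPval]; exact Submodule.starProjection_eq_self_iff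
    -- P commutes with the multiplication operators
    have hPM : ∀ (y : G) (u : Lp ℂ 2 mGh), P (M y u) = M y (P u) := by
      intro y u
      rw [hPval]
      refine Submodule.eq_starProjection_of_mem_of_inner_eq_zero (hMW y _ (hPmem u)) ?_
      intro z hz
      have hsub : M y u - M y (P u) = M y (u - P u) := by
        apply Lp.ext
        filter_upwards [Lp.coeFn_sub (M y u) (M y (P u)), hM y u, hM y (P u),
          hM y (u - P u), Lp.coeFn_sub u (P u)] with ξ h1 h2 h3 h4 h5
        rw [h1, Pi.sub_apply, h2, h3, h4, h5, Pi.sub_apply]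
        ring
      rw [hsub, hMadj]
      have hd : u - P u ∈ Wᗮ := by
        rw [hPval]
        exact Submodule.sub_starProjection_mem_orthogonal (K := W) u
      exact (Submodule.mem_orthogonal' W _).1 hd _ (hMW (-y) z hz)
    -- the key pointwise identity
    have hkey : ∀ u v : Lp ℂ 2 mGh,
        (fun ξ => u ξ * conj (P v ξ)) =ᵐ[mGh] fun ξ => P u ξ * conj (v ξ) := by
      intro u v
      have hint1 : Integrable (fun ξ => u ξ * conj (P v ξ)) mGh := by
        have h := L2.integrable_inner (𝕜 := ℂ) (P v) u
        refine h.congr (Filter.Eventually.of_forall fun ξ => ?_)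
        simp only [RCLike.inner_apply]
      have hint2 : Integrable (fun ξ => P u ξ * conj (v ξ)) mGh := by
        have h := L2.integrable_inner (𝕜 := ℂ) v (P u)
        refine h.congr (Filter.Eventually.of_forall fun ξ => ?_)
        simp only [RCLike.inner_apply]
      have hzero : ∀ x : G,
          ∫ ξ, (u ξ * conj (P v ξ) - P u ξ * conj (v ξ)) * e x ξ ∂mGh = 0 := by
        intro x
        have hI1 : Integrable (fun ξ => conj (P v ξ) * (M x u) ξ) mGh := by
          have h := L2.integrable_inner (𝕜 := ℂ) (P v) (M x u)
          refine h.congr (Filter.Eventually.of_forall fun ξ => ?_)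
          simp only [RCLike.inner_apply]; ring
        have hI2 : Integrable (fun ξ => conj (v ξ) * (M x (P u)) ξ) mGh := by
          have h := L2.integrable_inner (𝕜 := ℂ) v (M x (P u))
          refine h.congr (Filter.Eventually.of_forall fun ξ => ?_)
          simp only [RCLike.inner_apply]; ring
        have heq : (@inner ℂ _ _ (P v) (M x u)) = @inner ℂ _ _ v (M x (P u)) := by
          have h1 : (@inner ℂ _ _ (P v) (M x u)) = @inner ℂ _ _ v (P (M x u)) := by
            rw [hPval, hPval]
            exact Submodule.inner_starProjection_left_eq_right W v (M x u)
          rw [h1, hPM]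
        have e1 : (@inner ℂ _ _ (P v) (M x u)) = ∫ ξ, conj (P v ξ) * (e x ξ * u ξ) ∂mGh :=
          hinner _ _ _ _ Filter.EventuallyEq.rfl (hM x u)
        have e2 : (@inner ℂ _ _ v (M x (P u))) = ∫ ξ, conj (v ξ) * (e x ξ * P u ξ) ∂mGh :=
          hinner _ _ _ _ Filter.EventuallyEq.rfl (hM x (P u))
        have hsplit : ∫ ξ, (u ξ * conj (P v ξ) - P u ξ * conj (v ξ)) * e x ξ ∂mGh =
            (∫ ξ, conj (P v ξ) * (M x u) ξ ∂mGh) -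
              ∫ ξ, conj (v ξ) * (M x (P u)) ξ ∂mGh := by
          rw [← integral_sub hI1 hI2]
          refine integral_congr_ae ?_
          filter_upwards [hM x u, hM x (P u)] with ξ h1 h2
          rw [h1, h2]
          ring
        have e1' : ∫ ξ, conj (P v ξ) * (M x u) ξ ∂mGh =
            ∫ ξ, conj (P v ξ) * (e x ξ * u ξ) ∂mGh := by
          refine integral_congr_ae ?_
          filter_upwards [hM x u] with ξ h1
          rw [h1]
        have e2' : ∫ ξ, conj (v ξ) * (M x (P u)) ξ ∂mGh =
            ∫ ξ, conj (v ξ) * (e x ξ * P u ξ) ∂mGh := by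
          refine integral_congr_ae ?_
          filter_upwards [hM x (P u)] with ξ h1
          rw [h1]
        rw [hsplit, e1', e2', ← e1, ← e2, heq, sub_self]
      have hdet := hedet _ (hint1.sub hint2) hzero
      filter_upwards [hdet] with ξ hξ
      have h0 : u ξ * conj (P v ξ) - P u ξ * conj (v ξ) = 0 := hξ
      exact sub_eq_zero.1 h0
    -- a strictly positive L² weight
    obtain ⟨w0, hw0pos, hw0meas, hw0int⟩ :=
      exists_pos_lintegral_lt_of_sigmaFinite mGh (ε := 1) one_ne_zero
    set w : Gh → ℂ := fun ξ => ((Real.sqrt (w0 ξ) : ℝ) : ℂ) with hwdef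
    have hwconj : ∀ ξ, conj (w ξ) = w ξ := fun ξ => Complex.conj_ofReal _
    have hwne : ∀ ξ, w ξ ≠ 0 := by
      intro ξ
      have : (0 : ℝ) < Real.sqrt (w0 ξ) := Real.sqrt_pos.2 (by exact_mod_cast hw0pos ξ)
      simp only [hwdef, ne_eq, Complex.ofReal_eq_zero]
      exact ne_of_gt this
    have hwmeas : Measurable w :=
      Complex.measurable_ofReal.comp
        (Real.continuous_sqrt.measurable.comp hw0meas.coe_nnreal_real)
    have hw2 : MemLp w 2 mGh := by
      rw [memLp_two_iff_integrable_sq_norm hwmeas.aestronglyMeasurable]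
      have hind : (fun ξ => ‖w ξ‖ ^ 2) = fun ξ => ((w0 ξ : ℝ)) := by
        funext ξ
        simp only [hwdef, Complex.norm_real, Real.norm_eq_abs,
          abs_of_nonneg (Real.sqrt_nonneg _)]
        exact Real.sq_sqrt (w0 ξ).coe_nonneg
      rw [hind]
      exact ⟨hw0meas.coe_nnreal_real.aestronglyMeasurable,
        hasFiniteIntegral_iff_ofNNReal.2 (hw0int.trans ENNReal.one_lt_top)⟩
    set wL : Lp ℂ 2 mGh := hw2.toLp w with hwLdef
    have hwL : ⇑wL =ᵐ[mGh] w := MemLp.coeFn_toLp _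
    -- the projection of the weight is real a.e.
    have h_real : ∀ᵐ ξ ∂mGh, conj (P wL ξ) = P wL ξ := by
      filter_upwards [hkey wL wL, hwL] with ξ h1 h2
      rw [h2] at h1
      exact mul_left_cancel₀ (hwne ξ) (h1.trans (by rw [hwconj]; ring))
    -- dichotomy: a.e. the projection of the weight is 0 or w
    have h_dich : ∀ᵐ ξ ∂mGh, P wL ξ = 0 ∨ P wL ξ = w ξ := by
      have hk := hkey wL (P wL)
      rw [hPself (P wL) (hPmem wL)] at hk
      filter_upwards [hk, hwL, h_real] with ξ h1 h2 h3
      rw [h2, h3] at h1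
      rcases mul_eq_zero.1 (show P wL ξ * (P wL ξ - w ξ) = 0 by
          rw [mul_sub, ← h1]; ring) with h | h
      · exact Or.inl h
      · exact Or.inr (sub_eq_zero.1 h)
    -- a measurable representative of the projected weight
    have hPwm := Lp.aestronglyMeasurable (P wL)
    set m : Gh → ℂ := hPwm.mk _ with hmdef
    have hmae : ⇑(P wL) =ᵐ[mGh] m := hPwm.ae_eq_mk
    have hmmeas : StronglyMeasurable m := hPwm.stronglyMeasurable_mk
    refine ⟨{ξ | m ξ ≠ 0}, ?_, ?_⟩
    · have hs : {ξ | m ξ ≠ 0} = (m ⁻¹' {0})ᶜ := by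
        ext ξ; simp [Set.mem_preimage]
      rw [hs]
      exact (hmmeas.measurable (measurableSet_singleton 0)).compl
    · intro f
      rw [hWmem f, ← hPuiff]
      constructor
      · intro hPu
        have hk := hkey (F f) wL
        rw [hPu] at hk
        filter_upwards [hk, hwL, hmae] with ξ h1 h2 h3
        intro hE0
        have hm0 : m ξ = 0 := not_not.1 hE0
        have hPw0 : P wL ξ = 0 := h3.trans hm0
        have h4 : (F f) ξ * conj (wL ξ) = 0 := by
          rw [← h1, hPw0, map_zero, mul_zero]
        rw [h2, hwconj] at h4
        exact (mul_eq_zero.1 h4).resolve_right (hwne ξ)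
      · intro hsupp
        apply Lp.ext
        have hk := hkey (F f) wL
        filter_upwards [hk, hwL, hmae, h_dich, hsupp] with ξ h1 h2 h3 h5 h6
        by_cases hm0 : m ξ = 0
        · have hu0 : (F f) ξ = 0 := h6 (not_not.2 hm0)
          have hPw0 : P wL ξ = 0 := h3.trans hm0
          rw [hu0, zero_mul, h2, hwconj] at h1
          have h7 := (mul_eq_zero.1 h1.symm).resolve_right (hwne ξ)
          rw [h7, hu0]
        · have hPww : P wL ξ = w ξ := by
            rcases h5 with h | h
            · exact absurd (h3.symm.trans h) hm0
            · exact h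
          rw [hPww, hwconj, h2, hwconj] at h1
          exact (mul_right_cancel₀ (hwne ξ) h1).symm
  · -- easy direction
    rintro ⟨E, hE, hchar⟩ y f hf g hg
    have h1 := hFtrans y f g hg
    refine (hchar g).2 ?_
    filter_upwards [h1, (hchar f).1 hf] with ξ hξ hfξ hnotE
    rw [hξ, hfξ hnotE, mul_zero]
end
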